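/- arXiv:2103.09508 — 6 statements merged into one kernel-verified Lean document; each statement's English description precedes it below -/
import Mathlib

section
/- Let p be a prime and G a finite p-group. For any 𝔽_p[G]-module M and any m ∈ M, one has N_G·m = 0 if and only if m is a torsion element (equivalently, the annihilator of m in 𝔽_p[G] is a nonzero ideal). -/
open MonoidAlgebra

lemma norm_apply_eq_one (p : ℕ) (G : Type*) [Group G] [Fintype G] (a : G) :
    (∑ g : G, MonoidAlgebra.single g (1 : ZMod p)).coeff a = 1 := by
  classical
  rw [MonoidAlgebra.coeff_sum, Finsupp.finset_sum_apply]
  simp [MonoidAlgebra.coeff_single, Finsupp.single_apply]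

/-- Let `p` be a prime and `G` a finite `p`-group. For any `𝔽_p[G]`-module `M` and any
`m ∈ M`, one has `N_G • m = 0` if and only if `m` is a torsion element, i.e. `h • m = 0`
for some nonzero `h` in the group algebra. -/
theorem stmt_0 (p : ℕ) [Fact p.Prime] (G : Type*) [Group G] [Fintype G]
    (hG : IsPGroup p G)
    (M : Type*) [AddCommGroup M] [Module (MonoidAlgebra (ZMod p) G) M] (m : M) :
    (∑ g : G, MonoidAlgebra.single g (1 : ZMod p)) • m = 0 ↔
      ∃ h : MonoidAlgebra (ZMod p) G, h ≠ 0 ∧ h • m = 0 := by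
  classical
  set N : MonoidAlgebra (ZMod p) G := ∑ g : G, MonoidAlgebra.single g (1 : ZMod p) with hN
  constructor
  · intro hNm
    refine ⟨N, ?_, hNm⟩
    intro h0
    have := norm_apply_eq_one p G (1 : G)
    rw [← hN, h0] at this
    simp at this
  · rintro ⟨h, hne, hhm⟩
    -- the annihilator of m as a ZMod p submodule
    let S : Submodule (ZMod p) (MonoidAlgebra (ZMod p) G) :=
      { carrier := {x | x • m = 0}
        add_mem' := fun {a b} ha hb => by
          simp only [Set.mem_setOf_eq] at *
          rw [add_smul, ha, hb, add_zero]
        zero_mem' := by simp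
        smul_mem' := fun c a ha => by
          simp only [Set.mem_setOf_eq] at *
          rw [Algebra.smul_def, mul_smul, ha, smul_zero] }
    haveI : Finite (MonoidAlgebra (ZMod p) G) := by
      exact Finite.of_injective _ MonoidAlgebra.coeff_injective
    haveI : Finite S := Subtype.finite
    haveI : Module.Finite (ZMod p) (MonoidAlgebra (ZMod p) G) := Module.Finite.of_finite
    haveI : Module.Finite (ZMod p) S := Module.Finite.of_finite
    have hhS : h ∈ S := hhm
    -- G acts on S by left multiplication
    letI : SMul G S := ⟨fun g x => ⟨MonoidAlgebra.single g (1 : ZMod p) * x.1, by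
      have : ((MonoidAlgebra.single g (1 : ZMod p) * x.1) : MonoidAlgebra (ZMod p) G) • m
          = MonoidAlgebra.single g (1 : ZMod p) • (x.1 • m) := mul_smul _ _ _
      show _ ∈ S
      simp only [S, Submodule.mem_mk, AddSubmonoid.mem_mk, AddSubsemigroup.mem_mk,
        Set.mem_setOf_eq]
      rw [this, x.2, smul_zero]⟩⟩
    letI : MulAction G S :=
      { one_smul := fun x => by
          apply Subtype.ext
          show MonoidAlgebra.single (1 : G) (1 : ZMod p) * x.1 = x.1
          rw [MonoidAlgebra.one_def.symm, one_mul]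
        mul_smul := fun g g' x => by
          apply Subtype.ext
          show MonoidAlgebra.single (g * g') (1 : ZMod p) * x.1
            = MonoidAlgebra.single g (1 : ZMod p) * (MonoidAlgebra.single g' (1 : ZMod p) * x.1)
          rw [← mul_assoc, MonoidAlgebra.single_mul_single, one_mul] }
    have hnt : Nontrivial S := by
      refine ⟨⟨h, hhS⟩, 0, ?_⟩
      simp [Subtype.ext_iff, hne]
    have hdvd : p ∣ Nat.card S := by
      haveI : Fintype S := Fintype.ofFinite S
      rw [Nat.card_eq_fintype_card, Module.card_eq_pow_finrank (K := ZMod p) (V := S), ZMod.card]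
      exact dvd_pow_self p (by
        have := Module.finrank_pos (R := ZMod p) (M := S)
        omega)
    have h0fix : (0 : S) ∈ MulAction.fixedPoints G S := by
      intro g
      apply Subtype.ext
      show MonoidAlgebra.single g (1 : ZMod p) * (0 : MonoidAlgebra (ZMod p) G) = 0
      rw [mul_zero]
    obtain ⟨x, hxfix, hxne⟩ := hG.exists_fixed_point_of_prime_dvd_card_of_fixed_point S hdvd h0fix
    -- x is invariant: all coefficients equal
    have hconst : ∀ g : G, (x.1 : MonoidAlgebra (ZMod p) G).coeff g = x.1.coeff 1 := by
      intro g
      have := hxfix g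
      have hx : MonoidAlgebra.single g (1 : ZMod p) * x.1 = x.1 := congrArg Subtype.val this
      have := congrArg (fun y => MonoidAlgebra.coeff y g) hx
      rw [MonoidAlgebra.coeff_single_mul_apply, one_mul, inv_mul_cancel] at this
      exact this.symm
    set c : ZMod p := x.1.coeff 1 with hc
    have hcne : c ≠ 0 := by
      intro hc0
      apply hxne
      apply Subtype.ext
      ext a
      show (0 : MonoidAlgebra (ZMod p) G).coeff a = x.1.coeff a
      rw [hconst a, hc0]
      rfl
    -- N = c⁻¹ • x
    have hNx : N = c⁻¹ • (x.1 : MonoidAlgebra (ZMod p) G) := by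
      ext a
      rw [MonoidAlgebra.coeff_smul_apply, hconst a, smul_eq_mul, inv_mul_cancel₀ hcne, hN]
      exact norm_apply_eq_one p G a
    have hxm : (x.1 : MonoidAlgebra (ZMod p) G) • m = 0 := x.2
    rw [hNx, Algebra.smul_def, mul_smul, hxm, smul_zero]
end

section
/- Let p be a prime, G a finite p-group, and M a finitely generated 𝔽_p[G]-module with a decomposition M ≅ 𝔽_p[G]^t ⊕ N in which N is a torsion 𝔽_p[G]-module. Then the image N_G(M) of the norm map m ↦ N_G·m is an 𝔽_p-vector space of dimension exactly t. -/
/-- A module over a ring is torsion if every element is killed by some nonzero scalar. -/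
def IsTorsionModule (R M : Type*) [Semiring R] [AddCommMonoid M] [Module R M] : Prop :=
  ∀ m : M, ∃ r : R, r ≠ 0 ∧ r • m = 0

section Aux

variable (p : ℕ) [Fact p.Prime] (G : Type) [Group G] [Fintype G]

/-- The norm element of the group algebra. -/
noncomputable def normElt : MonoidAlgebra (ZMod p) G :=
  ∑ g : G, MonoidAlgebra.single g 1

lemma normElt_apply (h : G) : (normElt p G).coeff h = 1 := by
  classical
  rw [normElt, MonoidAlgebra.coeff_sum, Finsupp.finset_sum_apply]
  simp [MonoidAlgebra.coeff_single, Finsupp.single_apply]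

lemma normElt_ne_zero : normElt p G ≠ 0 := by
  intro h
  have h1 := normElt_apply p G 1
  rw [h] at h1
  simp at h1

lemma normElt_mul_single (h : G) (c : ZMod p) :
    normElt p G * MonoidAlgebra.single h c = c • normElt p G := by
  classical
  ext y
  rw [MonoidAlgebra.coeff_mul_single_apply, MonoidAlgebra.coeff_smul_apply, normElt_apply, normElt_apply,
    smul_eq_mul, mul_one, one_mul]

lemma exists_normElt_mul (x : MonoidAlgebra (ZMod p) G) :
    ∃ c : ZMod p, normElt p G * x = c • normElt p G := by
  classical
  refine ⟨x.coeff.sum fun _ c => c, ?_⟩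
  conv_lhs => rw [← MonoidAlgebra.sum_coeff_single x]
  rw [Finsupp.mul_sum]
  rw [Finsupp.sum, Finsupp.sum, Finset.sum_smul]
  exact Finset.sum_congr rfl fun h _ => normElt_mul_single p G h (x.coeff h)

variable {p G}

instance : Finite (MonoidAlgebra (ZMod p) G) :=
  Finite.of_equiv _ (Finsupp.equivFunOnFinite.symm.trans MonoidAlgebra.coeffEquiv.symm)

/-- Every nonzero element of the group algebra of a `p`-group left-divides the norm element. -/
lemma exists_mul_eq_normElt (hG : IsPGroup p G) (r : MonoidAlgebra (ZMod p) G) (hr : r ≠ 0) :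
    ∃ s : MonoidAlgebra (ZMod p) G, s * r = normElt p G := by
  classical
  set D : Submodule (ZMod p) (MonoidAlgebra (ZMod p) G) :=
    LinearMap.range (LinearMap.mulRight (ZMod p) r) with hD
  have hmem : ∀ y : MonoidAlgebra (ZMod p) G, y ∈ D → ∀ g : G, MonoidAlgebra.single g (1 : ZMod p) * y ∈ D := by
    rintro y ⟨a, rfl⟩ g
    exact ⟨MonoidAlgebra.single g 1 * a, by simp [LinearMap.mulRight_apply, mul_assoc]⟩
  letI : MulAction G D :=
    { smul := fun g x => ⟨MonoidAlgebra.single g 1 * (x : MonoidAlgebra (ZMod p) G), hmem _ x.2 g⟩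
      one_smul := fun x => by
        apply Subtype.ext
        show MonoidAlgebra.single (1 : G) (1 : ZMod p) * (x : MonoidAlgebra (ZMod p) G) = x
        rw [← MonoidAlgebra.one_def, one_mul]
      mul_smul := fun g h x => by
        apply Subtype.ext
        show MonoidAlgebra.single (g * h) (1 : ZMod p) * (x : MonoidAlgebra (ZMod p) G) =
          MonoidAlgebra.single g 1 * (MonoidAlgebra.single h 1 * (x : MonoidAlgebra (ZMod p) G))
        rw [← mul_assoc, MonoidAlgebra.single_mul_single, mul_one] }
  have hsmul_def : ∀ (g : G) (x : D),
      ((g • x : D) : MonoidAlgebra (ZMod p) G) = MonoidAlgebra.single g 1 * (x : MonoidAlgebra (ZMod p) G) := fun _ _ => rfl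
  have hzero : (0 : D) ∈ MulAction.fixedPoints G D := by
    intro g
    apply Subtype.ext
    rw [hsmul_def]
    simp
  have hDfin : Finite D := Subtype.finite
  have hrD : r ∈ D := ⟨1, one_mul r⟩
  have hDnontriv : Nontrivial D :=
    ⟨⟨⟨r, hrD⟩, 0, fun h => hr (by simpa [Subtype.ext_iff] using h)⟩⟩
  have hcard : p ∣ Nat.card D := by
    have := Fintype.ofFinite D
    have h1 : Fintype.card D = Fintype.card (ZMod p) ^ Module.finrank (ZMod p) D :=
      Module.card_eq_pow_finrank
    rw [ZMod.card] at h1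
    have hpos : 0 < Module.finrank (ZMod p) D := Module.finrank_pos
    rw [Nat.card_eq_fintype_card, h1]
    exact dvd_pow_self p hpos.ne'
  obtain ⟨y, hy, hy0⟩ :=
    hG.exists_fixed_point_of_prime_dvd_card_of_fixed_point (α := D) hcard hzero
  have hyfix : ∀ g : G, MonoidAlgebra.single g (1 : ZMod p) * (y : MonoidAlgebra (ZMod p) G) = (y : MonoidAlgebra (ZMod p) G) := by
    intro g
    have := hy g
    rw [Subtype.ext_iff, hsmul_def] at this
    exact this
  have hyconst : ∀ h : G, (y : MonoidAlgebra (ZMod p) G).coeff h = (y : MonoidAlgebra (ZMod p) G).coeff 1 := by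
    intro h
    have := congrArg (fun z : MonoidAlgebra (ZMod p) G => z.coeff h) (hyfix h)
    simpa [MonoidAlgebra.coeff_single_mul_apply] using this.symm
  set c : ZMod p := (y : MonoidAlgebra (ZMod p) G).coeff 1 with hc
  have hy_eq : (y : MonoidAlgebra (ZMod p) G) = c • normElt p G := by
    ext h
    rw [MonoidAlgebra.coeff_smul_apply, normElt_apply, smul_eq_mul, mul_one]
    exact hyconst h
  have hcne : c ≠ 0 := by
    intro h0
    apply hy0
    apply Subtype.ext
    show ((0 : D) : MonoidAlgebra (ZMod p) G) = (y : MonoidAlgebra (ZMod p) G)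
    rw [hy_eq, h0, zero_smul]
    rfl
  obtain ⟨a, ha⟩ := y.2
  refine ⟨c⁻¹ • a, ?_⟩
  have ha' : a * r = (y : MonoidAlgebra (ZMod p) G) := ha
  rw [smul_mul_assoc, ha', hy_eq, smul_smul, inv_mul_cancel₀ hcne, one_smul]

end Aux

/-- Let `p` be a prime, `G` a finite `p`-group, and `M` a finitely generated
`𝔽_p[G]`-module with a decomposition `M ≅ 𝔽_p[G]^t ⊕ N` where `N` is torsion.
Then the image of the norm map `m ↦ N_G • m` is an `𝔽_p`-vector space of dimension
exactly `t`. -/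
theorem stmt_3 (p : ℕ) [Fact p.Prime] (G : Type) [Group G] [Fintype G]
    (hG : IsPGroup p G)
    (V : Type) [AddCommGroup V] [Module (ZMod p) V]
    (ρ : Representation (ZMod p) G V)
    [Module.Finite (MonoidAlgebra (ZMod p) G) ρ.asModule]
    (t : ℕ) (N : Type) [AddCommGroup N] [Module (MonoidAlgebra (ZMod p) G) N]
    (hN : IsTorsionModule (MonoidAlgebra (ZMod p) G) N)
    (e : ρ.asModule ≃ₗ[MonoidAlgebra (ZMod p) G]
      (Fin t → MonoidAlgebra (ZMod p) G) × N) :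
    Module.finrank (ZMod p) (LinearMap.range (∑ g : G, ρ g)) = t := by
  classical
  have hkill : ∀ n : N, normElt p G • n = 0 := by
    intro n
    obtain ⟨r, hr0, hrn⟩ := hN n
    obtain ⟨s, hs⟩ := exists_mul_eq_normElt hG r hr0
    rw [← hs, mul_smul, hrn, smul_zero]
  set Φ : V →ₗ[ZMod p] V := ∑ g : G, ρ g with hΦ
  have hsmulΦ : ∀ m : ρ.asModule, (normElt p G • m : ρ.asModule) = Φ (ρ.asModuleEquiv m) := by
    intro m
    have h1 : ρ.asModuleEquiv (normElt p G • m) = ρ.asAlgebraHom (normElt p G) (ρ.asModuleEquiv m) :=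
      ρ.asModuleEquiv_map_smul _ m
    have h2 : ρ.asAlgebraHom (normElt p G) = Φ := by
      rw [normElt, hΦ, map_sum]
      exact Finset.sum_congr rfl fun g _ => ρ.asAlgebraHom_single_one g
    exact h1.trans (by rw [h2])
  have hMfin : Finite ρ.asModule := Module.finite_of_finite (MonoidAlgebra (ZMod p) G)
  have hrange : (LinearMap.range Φ : Set V) =
      Set.range fun m : ρ.asModule => ρ.asModuleEquiv (normElt p G • m) := by
    ext v
    simp only [SetLike.mem_coe, LinearMap.mem_range, Set.mem_range]
    constructor
    · rintro ⟨w, rfl⟩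
      refine ⟨ρ.asModuleEquiv.symm w, ?_⟩
      rw [hsmulΦ]
      rfl
    · rintro ⟨m, rfl⟩
      exact ⟨ρ.asModuleEquiv m, (hsmulΦ m).symm⟩
  set F : (Fin t → ZMod p) → (Fin t → MonoidAlgebra (ZMod p) G) × N :=
    fun c => (fun i => c i • normElt p G, 0) with hF
  have hrangeP : (Set.range fun x : (Fin t → MonoidAlgebra (ZMod p) G) × N => normElt p G • x) =
      Set.range F := by
    ext z
    simp only [Set.mem_range]
    constructor
    · rintro ⟨⟨f, n⟩, rfl⟩
      choose c hc using fun i => exists_normElt_mul p G (f i)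
      refine ⟨c, ?_⟩
      refine Prod.ext ?_ ?_
      · funext i
        simp only [hF, Prod.smul_fst, Pi.smul_apply, smul_eq_mul]
        exact (hc i).symm
      · simp only [hF, Prod.smul_snd]
        exact (hkill n).symm
    · rintro ⟨c, rfl⟩
      refine ⟨(fun i => MonoidAlgebra.single 1 (c i), 0), ?_⟩
      refine Prod.ext ?_ ?_
      · funext i
        simp only [hF, Prod.smul_fst, Pi.smul_apply, smul_eq_mul]
        exact normElt_mul_single p G 1 (c i)
      · simp only [hF, Prod.smul_snd]
        exact smul_zero _
  have hFinj : Function.Injective F := by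
    intro c c' h
    funext i
    have h1 := congrArg (fun z => z.1 i) h
    simp only [hF] at h1
    exact smul_left_injective (ZMod p) (normElt_ne_zero p G) h1
  have himage : (Set.range fun m : ρ.asModule => (normElt p G • m : ρ.asModule)) =
      ⇑e.symm '' Set.range (fun x : (Fin t → MonoidAlgebra (ZMod p) G) × N => normElt p G • x) := by
    ext m
    constructor
    · rintro ⟨m', rfl⟩
      exact ⟨normElt p G • e m', ⟨e m', rfl⟩, by rw [map_smul, e.symm_apply_apply]⟩
    · rintro ⟨x, ⟨x', rfl⟩, rfl⟩
      exact ⟨e.symm x', by rw [map_smul]⟩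
  have hcard : Nat.card (LinearMap.range Φ) = p ^ t := by
    have h0 : Nat.card (LinearMap.range Φ) =
        Nat.card (Set.range fun m : ρ.asModule => ρ.asModuleEquiv (normElt p G • m)) := by
      rw [← hrange]
      rfl
    rw [h0]
    have h1 : (Set.range fun m : ρ.asModule => ρ.asModuleEquiv (normElt p G • m)) =
        ⇑ρ.asModuleEquiv '' (Set.range fun m : ρ.asModule => (normElt p G • m : ρ.asModule)) := by
      rw [← Set.range_comp]
      rfl
    rw [h1, Nat.card_image_of_injective ρ.asModuleEquiv.injective, himage,
      Nat.card_image_of_injective e.symm.injective, hrangeP,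
      Nat.card_range_of_injective hFinj, Nat.card_pi]
    simp [Nat.card_zmod]
  have hVfin : Finite V := Finite.of_equiv ρ.asModule ρ.asModuleEquiv.toEquiv
  have := Fintype.ofFinite (LinearMap.range Φ : Submodule (ZMod p) V)
  have h2 : Fintype.card (LinearMap.range Φ) =
      Fintype.card (ZMod p) ^ Module.finrank (ZMod p) (LinearMap.range Φ) :=
    Module.card_eq_pow_finrank
  rw [ZMod.card, ← Nat.card_eq_fintype_card, hcard] at h2
  exact (Nat.pow_right_injective (Fact.out (p := p.Prime)).two_le h2.symm)
end

section
/- Let p be a prime and F/K a finite Galois extension of number fields whose Galois group G is a p-group. Let t = dim_{𝔽_p} N'_G(𝓔_F), where N'_G : 𝓔_F → 𝓔_K is induced by the norm N_{F/K}. Then t_G(𝓔_F) ≤ t ≤ t_G(𝓔_F) + dim_{𝔽_p}((𝒪_K^× ∩ (𝒪_F^×)^p)/(𝒪_K^×)^p). In particular, if 𝒪_K^× ∩ (𝒪_F^×)^p = (𝒪_K^×)^p, then t = t_G(𝓔_F). -/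
open NumberField

set_option linter.unusedSectionVars false
open MonoidAlgebra

section NuLemmas

variable (p : ℕ) [Fact p.Prime] (G : Type*) [Group G] [Fintype G]

noncomputable def nuEl : MonoidAlgebra (ZMod p) G := ∑ σ : G, MonoidAlgebra.single σ 1

variable {p G}

lemma nuEl_apply (τ : G) : (nuEl p G).coeff τ = 1 := by
  classical
  rw [nuEl, MonoidAlgebra.coeff_sum, Finsupp.finset_sum_apply]
  simp [MonoidAlgebra.coeff_single, Finsupp.single_apply]

lemma nuEl_ne_zero : nuEl p G ≠ 0 := by
  intro h
  have := nuEl_apply (p := p) (1 : G)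
  rw [h] at this
  simp at this

lemma smul_eq_single_one_mul (c : ZMod p) (f : MonoidAlgebra (ZMod p) G) :
    c • f = MonoidAlgebra.single 1 c * f := by
  rw [Algebra.smul_def]
  congr 1

lemma nuEl_eq_smul_of_fixed (x : MonoidAlgebra (ZMod p) G)
    (hx : ∀ σ : G, MonoidAlgebra.single σ (1 : ZMod p) * x = x) :
    x = x.coeff 1 • nuEl p G := by
  ext τ
  have h1 : x.coeff τ = x.coeff 1 := by
    have := congrArg (fun f : MonoidAlgebra (ZMod p) G => f.coeff τ) (hx τ)
    simpa [MonoidAlgebra.coeff_single_mul_apply] using this.symm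
  rw [MonoidAlgebra.coeff_smul_apply, nuEl_apply, smul_eq_mul, mul_one, h1]

lemma nuEl_mem_of_ne_bot (hG : IsPGroup p G)
    (J : Submodule (MonoidAlgebra (ZMod p) G) (MonoidAlgebra (ZMod p) G))
    (hJ : J ≠ ⊥) : nuEl p G ∈ J := by
  classical
  obtain ⟨h, hhJ, hh0⟩ := Submodule.exists_mem_ne_zero_of_ne_bot hJ
  haveI : Finite (MonoidAlgebra (ZMod p) G) :=
    Finite.of_equiv (G → ZMod p)
      ((Finsupp.equivFunOnFinite (α := G) (M := ZMod p)).symm.trans MonoidAlgebra.coeffEquiv.symm)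
  letI : MulAction G J :=
    { smul := fun σ x => ⟨MonoidAlgebra.single σ 1 * (x : MonoidAlgebra (ZMod p) G),
        J.smul_mem (MonoidAlgebra.single σ 1) x.2⟩
      one_smul := fun x => by
        apply Subtype.ext
        show MonoidAlgebra.single (1 : G) (1 : ZMod p) * (x : MonoidAlgebra (ZMod p) G) = x
        rw [MonoidAlgebra.one_def.symm, one_mul]
      mul_smul := fun σ τ x => by
        apply Subtype.ext
        show MonoidAlgebra.single (σ * τ) (1 : ZMod p) * (x : MonoidAlgebra (ZMod p) G) =
          MonoidAlgebra.single σ 1 * (MonoidAlgebra.single τ 1 * (x : MonoidAlgebra (ZMod p) G))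
        rw [← mul_assoc, MonoidAlgebra.single_mul_single, mul_one] }
  have hfin : Finite J := Subtype.finite
  have hord : addOrderOf (⟨h, hhJ⟩ : J) = p := by
    have hp : p • (⟨h, hhJ⟩ : J) = 0 := by
      apply Subtype.ext
      show p • h = 0
      rw [← Nat.cast_smul_eq_nsmul (ZMod p)]
      simp
    have hdvd : addOrderOf (⟨h, hhJ⟩ : J) ∣ p := addOrderOf_dvd_of_nsmul_eq_zero hp
    rcases (Nat.Prime.eq_one_or_self_of_dvd (Fact.out) _ hdvd) with h1 | h1
    · exfalso
      rw [AddMonoid.addOrderOf_eq_one_iff] at h1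
      exact hh0 (by simpa using congrArg Subtype.val h1)
    · exact h1
  have hpdvd : p ∣ Nat.card J := by
    have := addOrderOf_dvd_natCard (⟨h, hhJ⟩ : J)
    rwa [hord] at this
  have hmod := hG.card_modEq_card_fixedPoints (α := J)
  have hfixdvd : p ∣ Nat.card (MulAction.fixedPoints G J) :=
    (Nat.modEq_zero_iff_dvd).1 (hmod.symm.trans ((Nat.modEq_zero_iff_dvd).2 hpdvd))
  have hzero : (0 : J) ∈ MulAction.fixedPoints G J := by
    intro σ
    apply Subtype.ext
    show MonoidAlgebra.single σ (1 : ZMod p) * (0 : MonoidAlgebra (ZMod p) G) = 0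
    simp
  haveI : Finite (MulAction.fixedPoints G J) := Subtype.finite
  have hpos : 0 < Nat.card (MulAction.fixedPoints G J) :=
    Nat.card_pos_iff.2 ⟨⟨⟨0, hzero⟩⟩, inferInstance⟩
  have h2 : 2 ≤ Nat.card (MulAction.fixedPoints G J) :=
    le_trans (Fact.out : p.Prime).two_le (Nat.le_of_dvd hpos hfixdvd)
  obtain ⟨x, hxfix, hxne⟩ : ∃ x : J, x ∈ MulAction.fixedPoints G J ∧ x ≠ 0 := by
    by_contra hno
    push_neg at hno
    have huniq : ∀ y : MulAction.fixedPoints G J, y = ⟨0, hzero⟩ :=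
      fun ⟨y, hy⟩ => Subtype.ext (hno y hy)
    haveI : Unique (MulAction.fixedPoints G J) :=
      ⟨⟨⟨0, hzero⟩⟩, fun y => huniq y⟩
    have := Nat.card_unique (α := MulAction.fixedPoints G J)
    omega
  have hxfix' : ∀ σ : G, MonoidAlgebra.single σ (1 : ZMod p) * (x : MonoidAlgebra (ZMod p) G)
      = (x : MonoidAlgebra (ZMod p) G) := fun σ => congrArg Subtype.val (hxfix σ)
  have hxrep := nuEl_eq_smul_of_fixed _ hxfix'
  set c := (x : MonoidAlgebra (ZMod p) G).coeff 1 with hcdef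
  have hc : c ≠ 0 := by
    intro hc
    exact hxne (Subtype.ext (by rw [hxrep, hc, zero_smul]; simp))
  have hrepr : nuEl p G =
      MonoidAlgebra.single (1 : G) c⁻¹ * (x : MonoidAlgebra (ZMod p) G) := by
    rw [← smul_eq_single_one_mul, hxrep, smul_smul, inv_mul_cancel₀ hc, one_smul]
  rw [hrepr]
  exact J.smul_mem _ x.2

/-- The key consequence: `nuEl` kills every torsion element. -/
lemma nuEl_smul_eq_zero_of_torsion (hG : IsPGroup p G) {M : Type*} [AddCommGroup M]
    [Module (MonoidAlgebra (ZMod p) G) M] (m : M)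
    (hm : ∃ r : MonoidAlgebra (ZMod p) G, r ≠ 0 ∧ r • m = 0) :
    nuEl p G • m = 0 := by
  obtain ⟨r, hr0, hrm⟩ := hm
  have hmem : nuEl p G ∈ Submodule.span (MonoidAlgebra (ZMod p) G) {r} := by
    apply nuEl_mem_of_ne_bot hG
    intro hbot
    apply hr0
    have := Submodule.mem_span_singleton_self (R := MonoidAlgebra (ZMod p) G) r
    rw [hbot] at this
    simpa using this
  obtain ⟨a, ha⟩ := Submodule.mem_span_singleton.1 hmem
  rw [← ha, smul_assoc]  -- a • r • m
  rw [hrm, smul_zero]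

end NuLemmas

section PartB

variable {p : ℕ} [Fact p.Prime] {G : Type*} [Group G] [Fintype G]

lemma nuEl_mul (h : MonoidAlgebra (ZMod p) G) :
    nuEl p G * h = (∑ σ : G, h.coeff σ) • nuEl p G := by
  classical
  ext g
  rw [MonoidAlgebra.coeff_smul_apply, nuEl_apply, smul_eq_mul, mul_one]
  show ((∑ τ : G, MonoidAlgebra.single τ (1 : ZMod p)) * h).coeff g = _
  rw [Finset.sum_mul]
  show (∑ τ : G, MonoidAlgebra.single τ (1 : ZMod p) * h).coeff g = _
  rw [MonoidAlgebra.coeff_sum, Finsupp.finset_sum_apply]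
  rw [Finset.sum_congr rfl (fun τ _ => by
    rw [MonoidAlgebra.coeff_single_mul_apply, one_mul] :
    ∀ τ ∈ Finset.univ, (MonoidAlgebra.single τ (1 : ZMod p) * h).coeff g = h.coeff (τ⁻¹ * g))]
  exact Fintype.sum_equiv ⟨fun τ => τ⁻¹ * g, fun σ => g * σ⁻¹, fun τ => by group, fun σ => by
    group⟩ _ _ (fun τ => rfl)

lemma nuEl_mul_single_one (c : ZMod p) :
    nuEl p G * MonoidAlgebra.single (1 : G) c = c • nuEl p G := by
  classical
  rw [nuEl_mul]
  congr 1
  show (∑ σ : G, Finsupp.single (1:G) c σ) = c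
  simp [Finsupp.single_apply]

lemma card_nu_smul_range {M N : Type*} [AddCommMonoid M]
    [Module (MonoidAlgebra (ZMod p) G) M] [AddCommGroup N]
    [Module (MonoidAlgebra (ZMod p) G) N]
    (hN : ∀ n : N, ∃ r : MonoidAlgebra (ZMod p) G, r ≠ 0 ∧ r • n = 0)
    (hG : IsPGroup p G) (tG : ℕ)
    (e : M ≃ₗ[MonoidAlgebra (ZMod p) G] (Fin tG → MonoidAlgebra (ZMod p) G) × N) :
    Nat.card (Set.range fun m : M => nuEl p G • m) = p ^ tG := by
  classical
  set A := MonoidAlgebra (ZMod p) G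
  set f : (Fin tG → ZMod p) → M :=
    fun c => nuEl p G • e.symm (fun i => MonoidAlgebra.single (1 : G) (c i), 0) with hf
  have hfe : ∀ c, e (f c) = (fun i => (c i) • nuEl p G, 0) := by
    intro c
    rw [hf]
    show e (nuEl p G • e.symm _) = _
    rw [map_smul, e.apply_symm_apply, Prod.smul_mk, smul_zero]
    refine Prod.ext (funext fun i => ?_) rfl
    show nuEl p G * MonoidAlgebra.single (1 : G) (c i) = c i • nuEl p G
    exact nuEl_mul_single_one _
  have hrange : (Set.range fun m : M => nuEl p G • m) = Set.range f := by
    ext m'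
    constructor
    · rintro ⟨m, rfl⟩
      refine ⟨fun i => ∑ σ : G, ((e m).1 i).coeff σ, ?_⟩
      apply e.injective
      rw [hfe, map_smul]
      refine Prod.ext (funext fun i => ?_) ?_
      · show (∑ σ : G, ((e m).1 i).coeff σ) • nuEl p G = nuEl p G * ((e m).1 i)
        rw [nuEl_mul]
      · show (0 : N) = nuEl p G • (e m).2
        exact (nuEl_smul_eq_zero_of_torsion hG _ (hN _)).symm
    · rintro ⟨c, rfl⟩
      exact ⟨e.symm (fun i => MonoidAlgebra.single (1 : G) (c i), 0), rfl⟩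
  have hinj : Function.Injective f := by
    intro c c' hcc
    have := congrArg e hcc
    rw [hfe, hfe] at this
    funext i
    have hi := congrFun (congrArg Prod.fst this) i
    have h1 := congrArg (fun x : MonoidAlgebra (ZMod p) G => x.coeff 1) hi
    have e1 : ∀ d : ZMod p, (d • nuEl p G).coeff 1 = d := fun d => by
      rw [MonoidAlgebra.coeff_smul_apply, nuEl_apply, smul_eq_mul, mul_one]
    rw [← e1 (c i), ← e1 (c' i)]
    exact h1
  rw [hrange, Nat.card_coe_set_eq, ← Nat.card_coe_set_eq,
    Nat.card_range_of_injective hinj, Nat.card_eq_fintype_card, Fintype.card_fun]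
  simp

end PartB



/-- `𝓔_L`: the units of the ring of integers modulo `p`-th powers. -/
abbrev UnitsModP (p : ℕ) (F : Type*) [Field F] [NumberField F] : Type _ :=
  (𝓞 F)ˣ ⧸ (powMonoidHom p : (𝓞 F)ˣ →* (𝓞 F)ˣ).range

/-- The subgroup `𝒪_K^× ∩ (𝒪_F^×)^p` of `𝒪_K^×`. -/
noncomputable abbrev unitsBecomingPthPowers (p : ℕ) (K F : Type*) [Field K] [Field F]
    [NumberField K] [NumberField F] [Algebra K F] : Subgroup (𝓞 K)ˣ :=
  Subgroup.comap (Units.map (algebraMap (𝓞 K) (𝓞 F)).toMonoidHom)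
    (powMonoidHom p : (𝓞 F)ˣ →* (𝓞 F)ˣ).range

set_option maxHeartbeats 2000000 in
/-- Let `F/K` be a finite Galois extension of number fields whose Galois group `G` is a
`p`-group, and let `𝓔_F = 𝒪_F^×/(𝒪_F^×)^p` with its natural `𝔽_p[G]`-module structure
(axiomatised by `hcompat`).  Given a decomposition `𝓔_F ≅ 𝔽_p[G]^{tG} ⊕ N` with `N`
torsion, and letting `t = dim_{𝔽_p} N'_G(𝓔_F)` (encoded by `#N'_G(𝓔_F) = p^t`) and
`b = dim_{𝔽_p} (𝒪_K^× ∩ (𝒪_F^×)^p)/(𝒪_K^×)^p` (encoded similarly), one has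
`tG ≤ t ≤ tG + b`; and if `𝒪_K^× ∩ (𝒪_F^×)^p = (𝒪_K^×)^p` then `t = tG`. -/
theorem stmt_5 (p : ℕ) [Fact p.Prime] (K F : Type) [Field K] [Field F]
    [NumberField K] [NumberField F] [Algebra K F] [IsGalois K F] [FiniteDimensional K F]
    (hpgroup : IsPGroup p (F ≃ₐ[K] F))
    [Module (MonoidAlgebra (ZMod p) (F ≃ₐ[K] F)) (Additive (UnitsModP p F))]
    (hcompat : ∀ (σ : F ≃ₐ[K] F) (u u' : (𝓞 F)ˣ),
      algebraMap (𝓞 F) F (u' : 𝓞 F) = σ (algebraMap (𝓞 F) F (u : 𝓞 F)) →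
      MonoidAlgebra.single σ (1 : ZMod p) • Additive.ofMul (QuotientGroup.mk u : UnitsModP p F)
        = Additive.ofMul (QuotientGroup.mk u' : UnitsModP p F))
    (tG : ℕ) (N : Type) [AddCommGroup N]
    [Module (MonoidAlgebra (ZMod p) (F ≃ₐ[K] F)) N]
    (hN : IsTorsionModule (MonoidAlgebra (ZMod p) (F ≃ₐ[K] F)) N)
    (e : Additive (UnitsModP p F) ≃ₗ[MonoidAlgebra (ZMod p) (F ≃ₐ[K] F)]
      (Fin tG → MonoidAlgebra (ZMod p) (F ≃ₐ[K] F)) × N)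
    -- `t = dim_{𝔽_p} N'_G(𝓔_F)`
    (t : ℕ)
    (ht : Nat.card
      (((QuotientGroup.mk' ((powMonoidHom p : (𝓞 K)ˣ →* (𝓞 K)ˣ).range)).comp
        (Units.map (RingOfIntegers.norm K : 𝓞 F →* 𝓞 K))).range) = p ^ t)
    -- `b = dim_{𝔽_p} (𝒪_K^× ∩ (𝒪_F^×)^p)/(𝒪_K^×)^p`
    (b : ℕ)
    (hb : Nat.card
      (unitsBecomingPthPowers p K F ⧸
        ((powMonoidHom p : (𝓞 K)ˣ →* (𝓞 K)ˣ).range.subgroupOf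
          (unitsBecomingPthPowers p K F))) = p ^ b) :
    tG ≤ t ∧ t ≤ tG + b ∧
      (unitsBecomingPthPowers p K F = (powMonoidHom p : (𝓞 K)ˣ →* (𝓞 K)ˣ).range →
        t = tG) := by
  classical
  letI : Fintype (F ≃ₐ[K] F) := AlgEquiv.fintype K F
  have hp1 : 1 < p := (Fact.out : p.Prime).one_lt
  -- the maps
  set PK : Subgroup (𝓞 K)ˣ := (powMonoidHom p : (𝓞 K)ˣ →* (𝓞 K)ˣ).range with hPK
  set PF : Subgroup (𝓞 F)ˣ := (powMonoidHom p : (𝓞 F)ˣ →* (𝓞 F)ˣ).range with hPF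
  set j : (𝓞 K)ˣ →* (𝓞 F)ˣ := Units.map (algebraMap (𝓞 K) (𝓞 F)).toMonoidHom with hj
  set N' : (𝓞 F)ˣ →* UnitsModP p K :=
    (QuotientGroup.mk' PK).comp (Units.map (RingOfIntegers.norm K : 𝓞 F →* 𝓞 K)) with hN'
  have hle : PK ≤ PF.comap j := by
    rintro x ⟨v, rfl⟩
    exact ⟨j v, by simp [powMonoidHom, map_pow]⟩
  set φ : UnitsModP p K →* UnitsModP p F := QuotientGroup.map PK PF j hle with hφ
  -- units coming from Galois conjugation
  set conj : (F ≃ₐ[K] F) → (𝓞 F)ˣ →* (𝓞 F)ˣ :=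
    fun σ => Units.map (galRestrict (𝓞 K) K F (𝓞 F) σ : 𝓞 F →* 𝓞 F) with hconj
  -- Step C: φ (N' u) corresponds to nuEl • [u]
  have hcoe : ∀ σ : (F ≃ₐ[K] F), ∀ u : (𝓞 F)ˣ,
      algebraMap (𝓞 F) F ((conj σ u : (𝓞 F)ˣ) : 𝓞 F)
        = σ (algebraMap (𝓞 F) F (u : 𝓞 F)) := by
    intro σ u
    rw [hconj]
    show algebraMap (𝓞 F) F ((Units.map _ u : (𝓞 F)ˣ) : 𝓞 F) = _
    rw [Units.coe_map]
    exact algebraMap_galRestrict_apply (𝓞 K) σ (u : 𝓞 F)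
  have keyC : ∀ u : (𝓞 F)ˣ,
      Additive.ofMul (φ (N' u)) =
        nuEl p (F ≃ₐ[K] F) • Additive.ofMul (QuotientGroup.mk u : UnitsModP p F) := by
    intro u
    have hunit : j (Units.map (RingOfIntegers.norm K : 𝓞 F →* 𝓞 K) u)
        = ∏ σ : (F ≃ₐ[K] F), conj σ u := by
      apply Units.ext
      rw [show ((∏ σ : (F ≃ₐ[K] F), conj σ u : (𝓞 F)ˣ) : 𝓞 F) = ∏ σ : (F ≃ₐ[K] F), ((conj σ u : (𝓞 F)ˣ) : 𝓞 F)
        from map_prod (Units.coeHom (𝓞 F)) _ _]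
      apply IsFractionRing.injective (𝓞 F) F
      rw [map_prod]
      rw [Finset.prod_congr rfl (fun σ _ => hcoe σ u)]
      rw [← Algebra.norm_eq_prod_automorphisms]
      rw [hj]
      rw [Units.coe_map]
      show algebraMap (𝓞 F) F
        ((algebraMap (𝓞 K) (𝓞 F)) ((Units.map (RingOfIntegers.norm K : 𝓞 F →* 𝓞 K) u
          : (𝓞 K)ˣ) : 𝓞 K)) = _
      rw [Units.coe_map]
      show algebraMap (𝓞 F) F
        ((algebraMap (𝓞 K) (𝓞 F)) (RingOfIntegers.norm K ((u : (𝓞 F)ˣ) : 𝓞 F))) = _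
      rw [← RingOfIntegers.coe_eq_algebraMap, RingOfIntegers.coe_algebraMap_norm,
        ← RingOfIntegers.coe_eq_algebraMap]
    have hφNu : φ (N' u) = QuotientGroup.mk (∏ σ : (F ≃ₐ[K] F), conj σ u) := by
      rw [hN']
      show φ (QuotientGroup.mk' PK (Units.map _ u)) = _
      rw [QuotientGroup.mk'_apply, hφ, QuotientGroup.map_mk, hunit]
    rw [hφNu]
    have hsum : nuEl p (F ≃ₐ[K] F) • Additive.ofMul (QuotientGroup.mk u : UnitsModP p F)
        = ∑ σ : (F ≃ₐ[K] F), MonoidAlgebra.single σ (1 : ZMod p) •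
            Additive.ofMul (QuotientGroup.mk u : UnitsModP p F) := by
      rw [nuEl, Finset.sum_smul]
    rw [hsum]
    rw [Finset.sum_congr rfl (fun σ _ => hcompat σ u (conj σ u) (hcoe σ u))]
    rw [show (QuotientGroup.mk (∏ σ : (F ≃ₐ[K] F), conj σ u) : UnitsModP p F)
        = ∏ σ : (F ≃ₐ[K] F), (QuotientGroup.mk (conj σ u) : UnitsModP p F) from
      map_prod (QuotientGroup.mk' PF) _ _]
    rw [ofMul_prod]
  -- identify the range of φ ∘ N' with the nuEl-multiples
  have hcard1 : Nat.card ((φ.comp N').range) =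
      Nat.card (Set.range fun m : Additive (UnitsModP p F) => nuEl p (F ≃ₐ[K] F) • m) := by
    apply Nat.card_congr
    refine Equiv.subtypeEquiv (Additive.ofMul) (fun x => ⟨?_, ?_⟩)
    · rintro ⟨u, hu⟩
      refine ⟨Additive.ofMul (QuotientGroup.mk u : UnitsModP p F), ?_⟩
      show nuEl p (F ≃ₐ[K] F) • Additive.ofMul (QuotientGroup.mk u : UnitsModP p F) = Additive.ofMul x
      rw [← hu]
      exact (keyC u).symm
    · rintro ⟨m, hm⟩
      obtain ⟨u, hu⟩ := QuotientGroup.mk'_surjective PF (Additive.toMul m)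
      have hm' : Additive.ofMul (QuotientGroup.mk u : UnitsModP p F) = m := by
        rw [← QuotientGroup.mk'_apply, hu]
        rfl
      have hx : (φ.comp N') u = x := by
        apply Additive.ofMul.injective
        show Additive.ofMul (φ (N' u)) = Additive.ofMul x
        rw [keyC u, hm']
        exact hm
      exact ⟨u, hx⟩
  have hcard2 : Nat.card ((φ.comp N').range) = p ^ tG := by
    rw [hcard1]
    exact card_nu_smul_range (fun n => hN n) hpgroup tG e
  -- Step D : the kernel of φ has cardinality p ^ b
  have hkerφ : Nat.card φ.ker = p ^ b := by
    set H := unitsBecomingPthPowers p K F with hH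
    set θ : H →* UnitsModP p K := (QuotientGroup.mk' PK).comp H.subtype with hθ
    have hθker : θ.ker = PK.subgroupOf H := by
      ext x
      show QuotientGroup.mk' PK x.1 = 1 ↔ _
      rw [QuotientGroup.mk'_apply, QuotientGroup.eq_one_iff]
      rfl
    have hθrange : θ.range = φ.ker := by
      ext x
      constructor
      · rintro ⟨⟨u, hu⟩, rfl⟩
        show φ (QuotientGroup.mk' PK u) ∈ (⊥ : Subgroup (UnitsModP p F))
        rw [QuotientGroup.mk'_apply, hφ, QuotientGroup.map_mk, Subgroup.mem_bot,
          QuotientGroup.eq_one_iff]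
        exact hu
      · intro hx
        obtain ⟨u, rfl⟩ := QuotientGroup.mk'_surjective PK x
        rw [MonoidHom.mem_ker, QuotientGroup.mk'_apply, hφ, QuotientGroup.map_mk,
          QuotientGroup.eq_one_iff] at hx
        exact ⟨⟨u, hx⟩, rfl⟩
    calc Nat.card φ.ker = Nat.card θ.range := by rw [hθrange]
    _ = Nat.card (H ⧸ θ.ker) := (Nat.card_congr (QuotientGroup.quotientKerEquivRange θ).toEquiv).symm
    _ = p ^ b := by rw [hθker]; exact hb
  -- Step E : counting
  have hkerfin : Finite φ.ker := by
    refine (Nat.card_pos_iff.1 ?_).2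
    rw [hkerφ]
    exact Nat.pow_pos (n := b) (by omega)
  set R : Subgroup (UnitsModP p K) := N'.range with hR
  have hRcard : Nat.card R = p ^ t := ht
  have hRfin : Finite R := by
    refine (Nat.card_pos_iff.1 ?_).2
    rw [hRcard]
    exact Nat.pow_pos (n := t) (by omega)
  set ρ : R →* UnitsModP p F := φ.comp R.subtype with hρ
  have hρrange : ρ.range = (φ.comp N').range := by
    ext x
    constructor
    · rintro ⟨⟨y, u, rfl⟩, rfl⟩
      exact ⟨u, rfl⟩
    · rintro ⟨u, rfl⟩
      exact ⟨⟨N' u, u, rfl⟩, rfl⟩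
  have hρrangecard : Nat.card ρ.range = p ^ tG := by rw [hρrange]; exact hcard2
  have hρkerle : Nat.card ρ.ker ≤ p ^ b := by
    rw [← hkerφ]
    have hinj : Function.Injective (fun x : ρ.ker => (⟨((x : R) : UnitsModP p K), by
        have := x.2
        rw [MonoidHom.mem_ker] at this ⊢
        exact this⟩ : φ.ker)) := by
      intro x y hxy
      have h := hxy
      simp only [Subtype.mk.injEq] at h
      exact Subtype.ext (Subtype.ext h)
    exact Nat.card_le_card_of_injective _ hinj
  have hcount : p ^ t = p ^ tG * Nat.card ρ.ker := by
    rw [← hRcard, ← hρrangecard]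
    rw [Subgroup.card_eq_card_quotient_mul_card_subgroup ρ.ker]
    congr 1
    exact Nat.card_congr (QuotientGroup.quotientKerEquivRange ρ).toEquiv
  have hkerpos : 0 < Nat.card ρ.ker := by
    by_contra hc
    have : Nat.card ρ.ker = 0 := by omega
    rw [this, mul_zero] at hcount
    exact absurd hcount (by positivity)
  have h1 : tG ≤ t := by
    have : p ^ tG ≤ p ^ t := by
      calc p ^ tG = p ^ tG * 1 := (mul_one _).symm
      _ ≤ p ^ tG * Nat.card ρ.ker := Nat.mul_le_mul_left _ hkerpos
      _ = p ^ t := hcount.symm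
    exact (Nat.pow_le_pow_iff_right hp1).1 this
  have h2 : t ≤ tG + b := by
    have : p ^ t ≤ p ^ (tG + b) := by
      rw [hcount, pow_add]
      exact Nat.mul_le_mul_left _ hρkerle
    exact (Nat.pow_le_pow_iff_right hp1).1 this
  refine ⟨h1, h2, fun heq => ?_⟩
  have hb0 : b = 0 := by
    have htop : PK.subgroupOf (unitsBecomingPthPowers p K F) = ⊤ :=
      Subgroup.subgroupOf_eq_top.2 (le_of_eq heq)
    rw [htop] at hb
    haveI := QuotientGroup.subsingleton_quotient_top
      (G := unitsBecomingPthPowers p K F)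
    rw [Nat.card_of_subsingleton (1 : unitsBecomingPthPowers p K F ⧸
      (⊤ : Subgroup (unitsBecomingPthPowers p K F)))] at hb
    rcases Nat.eq_zero_or_pos b with h | h
    · exact h
    · exfalso
      have := Nat.one_lt_pow (by omega : b ≠ 0) hp1
      omega
  omega
end

section
/- Let p be a prime and L/K a finite Galois extension of number fields whose Galois group G is a p-group. Let F be an intermediate field with F/K Galois, and set H = Gal(L/F), so Gal(F/K) ≅ G/H. If 𝓔_L ≅ 𝔽_p[G]^t ⊕ N with N a torsion 𝔽_p[G]-module, and 𝓔_F ≅ 𝔽_p[G/H]^{t'} ⊕ N' with N' a torsion 𝔽_p[G/H]-module, then t' ≥ t. (In other words, the Minkowski free rank does not increase as one goes up a tower of Galois p-extensions.) -/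
open NumberField

section GroupAlgebra

variable (p : ℕ) [Fact p.Prime] (G : Type*) [Group G] [Fintype G]

/-- The "norm element" `∑ g, g` of the group algebra. -/
noncomputable def nuElem : MonoidAlgebra (ZMod p) G :=
  ∑ g : G, MonoidAlgebra.single g (1 : ZMod p)

variable {p G}

lemma nuElem_apply (y : G) : (nuElem p G).coeff y = 1 := by
  classical
  rw [nuElem, MonoidAlgebra.coeff_sum, Finset.sum_apply']
  simp [MonoidAlgebra.coeff_single, Finsupp.single_apply]

lemma nu_mul (a : MonoidAlgebra (ZMod p) G) :
    nuElem p G * a = (∑ g : G, a.coeff g) • nuElem p G := by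
  classical
  ext y
  rw [MonoidAlgebra.coeff_smul_apply, nuElem_apply, smul_eq_mul, mul_one]
  rw [nuElem, Finset.sum_mul, MonoidAlgebra.coeff_sum, Finset.sum_apply']
  simp only [MonoidAlgebra.coeff_single_mul_apply, one_mul]
  exact Fintype.sum_equiv ((Equiv.inv G).trans (Equiv.mulRight y)) _ _ (fun g => rfl)

lemma mul_single_one (c : ZMod p) :
    nuElem p G * MonoidAlgebra.single (1 : G) c = c • nuElem p G := by
  classical
  ext y
  rw [MonoidAlgebra.mul_single_apply, MonoidAlgebra.coeff_smul_apply, nuElem_apply, nuElem_apply,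
    smul_eq_mul, one_mul, mul_one]

lemma exists_mul_eq_nuElem (hp : IsPGroup p G) {r : MonoidAlgebra (ZMod p) G} (hr : r ≠ 0) :
    ∃ s, s * r = nuElem p G := by
  classical
  haveI : Finite (MonoidAlgebra (ZMod p) G) :=
    Finite.of_equiv _ (Finsupp.equivFunOnFinite.symm.trans MonoidAlgebra.coeffEquiv.symm)
  set T : AddSubgroup (MonoidAlgebra (ZMod p) G) := (AddMonoidHom.mulRight r).range with hT
  have hmemT : ∀ x, x ∈ T ↔ ∃ s, s * r = x := by
    intro x
    constructor
    · rintro ⟨s, rfl⟩; exact ⟨s, rfl⟩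
    · rintro ⟨s, rfl⟩; exact ⟨s, rfl⟩
  letI : SMul G T := ⟨fun g x => ⟨MonoidAlgebra.single g 1 * x.1, by
    obtain ⟨s, hs⟩ := (hmemT _).1 x.2
    exact (hmemT _).2 ⟨MonoidAlgebra.single g 1 * s, by rw [mul_assoc, hs]⟩⟩⟩
  letI : MulAction G T :=
    { one_smul := fun x => Subtype.ext (by
        show MonoidAlgebra.single (1 : G) (1 : ZMod p) * x.1 = x.1
        rw [← MonoidAlgebra.one_def, one_mul])
      mul_smul := fun g h x => Subtype.ext (by
        show MonoidAlgebra.single (g * h) (1 : ZMod p) * x.1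
            = MonoidAlgebra.single g 1 * (MonoidAlgebra.single h 1 * x.1)
        rw [← mul_assoc, MonoidAlgebra.single_mul_single, mul_one]) }
  have hpT : p ∣ Nat.card T := by
    have hrT : r ∈ T := (hmemT r).2 ⟨1, one_mul r⟩
    have h1 : addOrderOf (⟨r, hrT⟩ : T) = p := by
      refine addOrderOf_eq_prime ?_ ?_
      · apply Subtype.ext
        show (p : ℕ) • r = 0
        rw [← Nat.cast_smul_eq_nsmul (ZMod p), ZMod.natCast_self, zero_smul]
      · exact fun h => hr (by simpa using congrArg Subtype.val h)
    have h2 := addOrderOf_dvd_natCard (⟨r, hrT⟩ : T)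
    rwa [h1] at h2
  have hcong := hp.card_modEq_card_fixedPoints T
  have hfix : p ∣ Nat.card (MulAction.fixedPoints G T) :=
    Nat.modEq_zero_iff_dvd.1 (hcong.symm.trans (Nat.modEq_zero_iff_dvd.2 hpT))
  have h0fix : (0 : T) ∈ MulAction.fixedPoints G T := by
    intro g
    apply Subtype.ext
    show MonoidAlgebra.single g (1 : ZMod p) * (0 : MonoidAlgebra (ZMod p) G) = 0
    rw [mul_zero]
  obtain ⟨x, hxf, hx0⟩ : ∃ x ∈ MulAction.fixedPoints G T, x ≠ 0 := by
    by_contra hcon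
    push_neg at hcon
    have hset : MulAction.fixedPoints G T = {0} :=
      Set.eq_singleton_iff_unique_mem.2 ⟨h0fix, fun x hx => hcon x hx⟩
    rw [hset, Nat.card_coe_set_eq, Set.ncard_singleton] at hfix
    exact (Fact.out (p := p.Prime)).one_lt.ne' (Nat.dvd_one.1 hfix)
  obtain ⟨s, hs⟩ := (hmemT _).1 x.2
  have hconst : ∀ y : G, (x.1 : MonoidAlgebra (ZMod p) G).coeff y = x.1.coeff 1 := by
    intro y
    have h2 : (MonoidAlgebra.single y (1 : ZMod p) * x.1).coeff y = x.1.coeff y :=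
      congrArg (fun z : MonoidAlgebra (ZMod p) G => z.coeff y) (congrArg Subtype.val (hxf y))
    rw [MonoidAlgebra.single_mul_apply, inv_mul_cancel, one_mul] at h2
    exact h2.symm
  have hc0 : x.1.coeff 1 ≠ 0 := by
    intro h
    apply hx0
    apply Subtype.ext
    apply MonoidAlgebra.ext
    apply Finsupp.ext
    intro y
    rw [hconst y, h]
    rfl
  obtain ⟨c, hc⟩ : ∃ c : ZMod p, (x.1 : MonoidAlgebra (ZMod p) G).coeff 1 = c := ⟨_, rfl⟩
  rw [hc] at hc0
  have hxnu : x.1 = c • nuElem p G := by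
    apply MonoidAlgebra.ext
    apply Finsupp.ext
    intro y
    rw [MonoidAlgebra.coeff_smul_apply, nuElem_apply, smul_eq_mul, mul_one, hconst y, hc]
  refine ⟨c⁻¹ • s, ?_⟩
  rw [smul_mul_assoc, hs, hxnu, smul_smul, inv_mul_cancel₀ hc0, one_smul]

lemma nuElem_smul_eq_zero (hp : IsPGroup p G) {M : Type*} [AddCommGroup M]
    [Module (MonoidAlgebra (ZMod p) G) M]
    (hM : IsTorsionModule (MonoidAlgebra (ZMod p) G) M) (m : M) :
    nuElem p G • m = 0 := by
  obtain ⟨r, hr, hrm⟩ := hM m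
  obtain ⟨s, hs⟩ := exists_mul_eq_nuElem hp hr
  rw [← hs, mul_smul, hrm, smul_zero]

lemma range_nu_card (hp : IsPGroup p G) {M N : Type*} [AddCommGroup M] [AddCommGroup N]
    [Module (MonoidAlgebra (ZMod p) G) M] [Module (MonoidAlgebra (ZMod p) G) N]
    (hN : IsTorsionModule (MonoidAlgebra (ZMod p) G) N) (t : ℕ)
    (e : M ≃ₗ[MonoidAlgebra (ZMod p) G] (Fin t → MonoidAlgebra (ZMod p) G) × N) :
    (Set.range fun x : M => nuElem p G • x).Finite ∧
      (Set.range fun x : M => nuElem p G • x).ncard = p ^ t := by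
  classical
  set gmap : (Fin t → ZMod p) → (Fin t → MonoidAlgebra (ZMod p) G) × N :=
    fun c => (fun i => c i • nuElem p G, 0) with hg
  have hinj : Function.Injective gmap := by
    intro c c' h
    funext i
    have h2 : (c i • nuElem p G).coeff 1 = (c' i • nuElem p G).coeff 1 :=
      congrArg (fun z : (Fin t → MonoidAlgebra (ZMod p) G) × N => (z.1 i).coeff 1) h
    rwa [MonoidAlgebra.coeff_smul_apply, MonoidAlgebra.coeff_smul_apply, nuElem_apply, smul_eq_mul, smul_eq_mul,
      mul_one, mul_one] at h2
  have himg : (⇑e) '' (Set.range fun x : M => nuElem p G • x) = Set.range gmap := by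
    ext z
    constructor
    · rintro ⟨_, ⟨x, rfl⟩, rfl⟩
      refine ⟨fun i => ∑ g : G, ((e x).1 i).coeff g, ?_⟩
      rw [map_smul]
      apply Prod.ext
      · funext i
        show (∑ g : G, ((e x).1 i).coeff g) • nuElem p G = (nuElem p G • (e x)).1 i
        rw [Prod.smul_fst, Pi.smul_apply, smul_eq_mul, nu_mul]
      · show (0 : N) = (nuElem p G • (e x)).2
        rw [Prod.smul_snd]
        exact (nuElem_smul_eq_zero hp hN _).symm
    · rintro ⟨c, rfl⟩
      refine ⟨nuElem p G • e.symm ((fun i => MonoidAlgebra.single 1 (c i)), 0),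
        ⟨_, rfl⟩, ?_⟩
      rw [map_smul, e.apply_symm_apply]
      apply Prod.ext
      · funext i
        show (nuElem p G • ((fun i => MonoidAlgebra.single (1:G) (c i)), (0:N))).1 i
            = c i • nuElem p G
        rw [Prod.smul_fst, Pi.smul_apply, smul_eq_mul, mul_single_one]
      · show (nuElem p G • ((fun i => MonoidAlgebra.single (1:G) (c i)), (0:N))).2 = 0
        rw [Prod.smul_snd, smul_zero]
  have hfin2 : (Set.range gmap).Finite := Set.finite_range _
  have hpre : (Set.range fun x : M => nuElem p G • x) = ⇑e ⁻¹' (Set.range gmap) := by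
    rw [← himg, Set.preimage_image_eq _ e.injective]
  have hfin : (Set.range fun x : M => nuElem p G • x).Finite := by
    rw [hpre]
    exact hfin2.preimage (Set.injOn_of_injective e.injective)
  refine ⟨hfin, ?_⟩
  calc (Set.range fun x : M => nuElem p G • x).ncard
      = ((⇑e) '' (Set.range fun x : M => nuElem p G • x)).ncard :=
        (Set.ncard_image_of_injective _ e.injective).symm
    _ = (Set.range gmap).ncard := by rw [himg]
    _ = Nat.card (Fin t → ZMod p) := by
        rw [← Nat.card_coe_set_eq, Nat.card_range_of_injective hinj]
    _ = p ^ t := by simp [Nat.card_fun, Nat.card_zmod]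

end GroupAlgebra


section helper

variable (p : ℕ) [Fact p.Prime] (K E : Type) [Field K] [Field E] [NumberField E]
  [Algebra K E] [FiniteDimensional K E]
  [Module (MonoidAlgebra (ZMod p) (E ≃ₐ[K] E)) (Additive (UnitsModP p E))]


lemma nu_smul_mk
    (hcompat : ∀ (σ : E ≃ₐ[K] E) (u u' : (𝓞 E)ˣ),
      algebraMap (𝓞 E) E (u' : 𝓞 E) = σ (algebraMap (𝓞 E) E (u : 𝓞 E)) →
      MonoidAlgebra.single σ (1 : ZMod p) • Additive.ofMul (QuotientGroup.mk u : UnitsModP p E)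
        = Additive.ofMul (QuotientGroup.mk u' : UnitsModP p E))
    (u : (𝓞 E)ˣ) (U : (E ≃ₐ[K] E) → (𝓞 E)ˣ)
    (hU : ∀ σ, algebraMap (𝓞 E) E (U σ : 𝓞 E) = σ (algebraMap (𝓞 E) E (u : 𝓞 E))) :
    nuElem p (E ≃ₐ[K] E) • Additive.ofMul (QuotientGroup.mk u : UnitsModP p E)
      = Additive.ofMul (QuotientGroup.mk (∏ σ : E ≃ₐ[K] E, U σ) : UnitsModP p E) := by
  rw [nuElem, Finset.sum_smul]
  have h1 : (QuotientGroup.mk (∏ σ : E ≃ₐ[K] E, U σ) : UnitsModP p E)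
      = ∏ σ : E ≃ₐ[K] E, (QuotientGroup.mk (U σ) : UnitsModP p E) :=
    map_prod (QuotientGroup.mk' _) _ _
  have h2 : Additive.ofMul (∏ σ : E ≃ₐ[K] E, (QuotientGroup.mk (U σ) : UnitsModP p E))
      = ∑ σ : E ≃ₐ[K] E, Additive.ofMul (QuotientGroup.mk (U σ) : UnitsModP p E) := rfl
  rw [h1, h2]
  exact Finset.sum_congr rfl fun σ _ => hcompat σ u (U σ) (hU σ)

end helper
/-- Let `L/K` be a finite Galois extension of number fields whose Galois group `G` is a
`p`-group, and let `F` be an intermediate field, Galois over `K` (so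
`Gal(F/K) ≅ G/H` with `H = Gal(L/F)`).  If `𝓔_L ≅ 𝔽_p[G]^t ⊕ N` with `N` torsion, and
`𝓔_F ≅ 𝔽_p[Gal(F/K)]^{t'} ⊕ N'` with `N'` torsion, then `t' ≥ t`: the Minkowski free
rank does not increase going up the tower. -/
theorem stmt_6 (p : ℕ) [Fact p.Prime] (K F L : Type) [Field K] [Field F] [Field L]
    [NumberField K] [NumberField F] [NumberField L]
    [Algebra K F] [Algebra K L] [Algebra F L] [IsScalarTower K F L]
    [IsGalois K L] [IsGalois K F] [FiniteDimensional K L]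
    (hpgroup : IsPGroup p (L ≃ₐ[K] L))
    -- the `𝔽_p[Gal(L/K)]`-module structure on `𝓔_L`
    [Module (MonoidAlgebra (ZMod p) (L ≃ₐ[K] L)) (Additive (UnitsModP p L))]
    (hcompatL : ∀ (σ : L ≃ₐ[K] L) (u u' : (𝓞 L)ˣ),
      algebraMap (𝓞 L) L (u' : 𝓞 L) = σ (algebraMap (𝓞 L) L (u : 𝓞 L)) →
      MonoidAlgebra.single σ (1 : ZMod p) • Additive.ofMul (QuotientGroup.mk u : UnitsModP p L)
        = Additive.ofMul (QuotientGroup.mk u' : UnitsModP p L))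
    -- the `𝔽_p[Gal(F/K)]`-module structure on `𝓔_F`
    [Module (MonoidAlgebra (ZMod p) (F ≃ₐ[K] F)) (Additive (UnitsModP p F))]
    (hcompatF : ∀ (σ : F ≃ₐ[K] F) (u u' : (𝓞 F)ˣ),
      algebraMap (𝓞 F) F (u' : 𝓞 F) = σ (algebraMap (𝓞 F) F (u : 𝓞 F)) →
      MonoidAlgebra.single σ (1 : ZMod p) • Additive.ofMul (QuotientGroup.mk u : UnitsModP p F)
        = Additive.ofMul (QuotientGroup.mk u' : UnitsModP p F))
    -- decompositions
    (t : ℕ) (N : Type) [AddCommGroup N]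
    [Module (MonoidAlgebra (ZMod p) (L ≃ₐ[K] L)) N]
    (hN : IsTorsionModule (MonoidAlgebra (ZMod p) (L ≃ₐ[K] L)) N)
    (e : Additive (UnitsModP p L) ≃ₗ[MonoidAlgebra (ZMod p) (L ≃ₐ[K] L)]
      (Fin t → MonoidAlgebra (ZMod p) (L ≃ₐ[K] L)) × N)
    (t' : ℕ) (N' : Type) [AddCommGroup N']
    [Module (MonoidAlgebra (ZMod p) (F ≃ₐ[K] F)) N']
    (hN' : IsTorsionModule (MonoidAlgebra (ZMod p) (F ≃ₐ[K] F)) N')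
    (e' : Additive (UnitsModP p F) ≃ₗ[MonoidAlgebra (ZMod p) (F ≃ₐ[K] F)]
      (Fin t' → MonoidAlgebra (ZMod p) (F ≃ₐ[K] F)) × N') :
    t ≤ t' := by
  classical
  haveI : FiniteDimensional K F := Module.Finite.left K F L
  have hpgroup' : IsPGroup p (F ≃ₐ[K] F) :=
    hpgroup.of_surjective (AlgEquiv.restrictNormalHom F)
      (AlgEquiv.restrictNormalHom_surjective L)
  obtain ⟨hfinL, hcardL⟩ := range_nu_card (M := Additive (UnitsModP p L)) hpgroup hN t e
  obtain ⟨hfinF, hcardF⟩ := range_nu_card (M := Additive (UnitsModP p F)) hpgroup' hN' t' e'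
  -- the map `𝓔_F → 𝓔_L`
  let jU : (𝓞 F)ˣ →* (𝓞 L)ˣ := Units.map (algebraMap (𝓞 F) (𝓞 L)).toMonoidHom
  have hsub : ((powMonoidHom p : (𝓞 F)ˣ →* (𝓞 F)ˣ).range) ≤
      ((powMonoidHom p : (𝓞 L)ˣ →* (𝓞 L)ˣ).range.comap jU) := by
    rintro x ⟨y, rfl⟩
    exact ⟨jU y, by simp [powMonoidHom_apply, map_pow]⟩
  let fq : UnitsModP p F → UnitsModP p L := QuotientGroup.map _ _ jU hsub
  let f : Additive (UnitsModP p F) → Additive (UnitsModP p L) :=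
    fun x => Additive.ofMul (fq (Additive.toMul x))
  have hincl : (Set.range fun x : Additive (UnitsModP p L) => nuElem p (L ≃ₐ[K] L) • x)
      ⊆ f '' (Set.range fun x : Additive (UnitsModP p F) => nuElem p (F ≃ₐ[K] F) • x) := by
    rintro _ ⟨y, rfl⟩
    obtain ⟨u, rfl⟩ : ∃ u : (𝓞 L)ˣ, y = Additive.ofMul (QuotientGroup.mk u) := by
      obtain ⟨u, hu⟩ := QuotientGroup.mk_surjective (Additive.toMul y)
      exact ⟨u, by rw [hu]; rfl⟩
    set v : (𝓞 F)ˣ := Units.map (RingOfIntegers.norm F) u with hv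
    refine ⟨nuElem p (F ≃ₐ[K] F) • Additive.ofMul (QuotientGroup.mk v : UnitsModP p F),
      ⟨_, rfl⟩, ?_⟩
    set U : (L ≃ₐ[K] L) → (𝓞 L)ˣ :=
      fun σ => Units.map (RingOfIntegers.mapRingHom σ).toMonoidHom u with hUdef
    set V : (F ≃ₐ[K] F) → (𝓞 F)ˣ :=
      fun τ => Units.map (RingOfIntegers.mapRingHom τ).toMonoidHom v with hVdef
    have hUc : ∀ σ, algebraMap (𝓞 L) L (U σ : 𝓞 L) = σ (algebraMap (𝓞 L) L (u : 𝓞 L)) :=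
      fun σ => rfl
    have hVc : ∀ τ, algebraMap (𝓞 F) F (V τ : 𝓞 F) = τ (algebraMap (𝓞 F) F (v : 𝓞 F)) :=
      fun τ => rfl
    show f (nuElem p (F ≃ₐ[K] F) • Additive.ofMul (QuotientGroup.mk v : UnitsModP p F))
      = nuElem p (L ≃ₐ[K] L) • Additive.ofMul (QuotientGroup.mk u : UnitsModP p L)
    rw [nu_smul_mk p K F hcompatF v V hVc, nu_smul_mk p K L hcompatL u U hUc]
    show Additive.ofMul (QuotientGroup.map _ _ jU hsub (QuotientGroup.mk (∏ τ : F ≃ₐ[K] F, V τ)))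
      = Additive.ofMul (QuotientGroup.mk (∏ σ : L ≃ₐ[K] L, U σ))
    rw [QuotientGroup.map_mk]
    have hunits : jU (∏ τ : F ≃ₐ[K] F, V τ) = ∏ σ : L ≃ₐ[K] L, U σ := by
      apply Units.ext
      apply RingOfIntegers.coe_injective (K := L)
      show (algebraMap (𝓞 L) L) ((jU (∏ τ : F ≃ₐ[K] F, V τ) : (𝓞 L)ˣ) : 𝓞 L)
        = (algebraMap (𝓞 L) L) ((∏ σ : L ≃ₐ[K] L, U σ : (𝓞 L)ˣ) : 𝓞 L)
      have hcoeprodF : ((∏ τ : F ≃ₐ[K] F, V τ : (𝓞 F)ˣ) : 𝓞 F) = ∏ τ : F ≃ₐ[K] F, ((V τ : (𝓞 F)ˣ) : 𝓞 F) :=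
        map_prod (Units.coeHom (𝓞 F)) _ _
      have hcoeprodL : ((∏ σ : L ≃ₐ[K] L, U σ : (𝓞 L)ˣ) : 𝓞 L) = ∏ σ : L ≃ₐ[K] L, ((U σ : (𝓞 L)ˣ) : 𝓞 L) :=
        map_prod (Units.coeHom (𝓞 L)) _ _
      calc (algebraMap (𝓞 L) L) ((jU (∏ τ : F ≃ₐ[K] F, V τ) : (𝓞 L)ˣ) : 𝓞 L)
          = algebraMap F L (algebraMap (𝓞 F) F ((∏ τ : F ≃ₐ[K] F, V τ : (𝓞 F)ˣ) : 𝓞 F)) := rfl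
        _ = algebraMap F L (∏ τ : F ≃ₐ[K] F, (algebraMap (𝓞 F) F ((V τ : (𝓞 F)ˣ) : 𝓞 F))) := by
            rw [hcoeprodF, map_prod]
        _ = algebraMap F L (∏ τ : F ≃ₐ[K] F, τ (algebraMap (𝓞 F) F (v : 𝓞 F))) := by
            rw [Finset.prod_congr rfl fun τ _ => hVc τ]
        _ = algebraMap F L (algebraMap K F (Algebra.norm K (algebraMap (𝓞 F) F (v : 𝓞 F)))) := by
            rw [Algebra.norm_eq_prod_automorphisms]
        _ = algebraMap K L (Algebra.norm K (algebraMap (𝓞 F) F (v : 𝓞 F))) :=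
            (IsScalarTower.algebraMap_apply K F L _).symm
        _ = algebraMap K L (Algebra.norm K (Algebra.norm F (algebraMap (𝓞 L) L (u : 𝓞 L)))) := by
            rw [hv]
            norm_num [RingOfIntegers.coe_norm]
        _ = algebraMap K L (Algebra.norm K (algebraMap (𝓞 L) L (u : 𝓞 L))) := by
            rw [Algebra.norm_norm]
        _ = ∏ σ : L ≃ₐ[K] L, σ (algebraMap (𝓞 L) L (u : 𝓞 L)) := by
            rw [Algebra.norm_eq_prod_automorphisms]
        _ = ∏ σ : L ≃ₐ[K] L, algebraMap (𝓞 L) L ((U σ : (𝓞 L)ˣ) : 𝓞 L) := by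
            rw [Finset.prod_congr rfl fun σ _ => (hUc σ).symm]
        _ = (algebraMap (𝓞 L) L) ((∏ σ : L ≃ₐ[K] L, U σ : (𝓞 L)ˣ) : 𝓞 L) := by
            rw [hcoeprodL, map_prod]
    rw [hunits]
  have hle : p ^ t ≤ p ^ t' := by
    rw [← hcardL, ← hcardF]
    calc (Set.range fun x : Additive (UnitsModP p L) => nuElem p (L ≃ₐ[K] L) • x).ncard
        ≤ (f '' (Set.range fun x : Additive (UnitsModP p F) => nuElem p (F ≃ₐ[K] F) • x)).ncard :=
          Set.ncard_le_ncard hincl (hfinF.image f)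
      _ ≤ (Set.range fun x : Additive (UnitsModP p F) => nuElem p (F ≃ₐ[K] F) • x).ncard :=
          Set.ncard_image_le hfinF
  exact (Nat.pow_le_pow_iff_right (Fact.out (p := p.Prime)).one_lt).1 hle
end

section
/- Let p be a prime, Γ a finite p-group, and Γ' a normal subgroup of Γ. Let I_Γ denote the augmentation ideal of 𝔽_p[Γ] (the kernel of the augmentation map 𝔽_p[Γ] → 𝔽_p), and let k(Γ) denote the least positive integer n such that I_Γ^n = 0 (which exists, since I_Γ^{|Γ|} = 0 for a finite p-group). Then k(Γ) ≤ k(Γ/Γ') · k(Γ'). -/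
/-- The augmentation ideal of the group algebra `𝔽_p[Γ]`, viewed as an
`𝔽_p`-subspace of the algebra (so that powers make sense also for noncommutative `Γ`). -/
noncomputable def augIdeal (p : ℕ) [Fact p.Prime] (Γ : Type) [Monoid Γ] :
    Submodule (ZMod p) (MonoidAlgebra (ZMod p) Γ) :=
  LinearMap.ker (MonoidAlgebra.lift (ZMod p) (ZMod p) Γ (1 : Γ →* ZMod p)).toLinearMap

/-- `k(Γ)`: the least positive integer `n` with `I_Γ ^ n = 0`. -/
noncomputable def augNilIndex (p : ℕ) [Fact p.Prime] (Γ : Type) [Monoid Γ] : ℕ :=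
  sInf {n : ℕ | 0 < n ∧ augIdeal p Γ ^ n = ⊥}

open MonoidAlgebra Submodule

section Aux

variable (p : ℕ) [Fact p.Prime]

lemma mem_augIdeal_iff {Γ : Type} [Monoid Γ] (x : MonoidAlgebra (ZMod p) Γ) :
    x ∈ augIdeal p Γ ↔ MonoidAlgebra.lift (ZMod p) (ZMod p) Γ (1 : Γ →* ZMod p) x = 0 :=
  LinearMap.mem_ker

lemma of_sub_one_mem_augIdeal {Γ : Type} [Monoid Γ] (g : Γ) :
    MonoidAlgebra.of (ZMod p) Γ g - 1 ∈ augIdeal p Γ := by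
  rw [mem_augIdeal_iff, map_sub, MonoidAlgebra.lift_of, map_one]
  simp

lemma augIdeal_eq_span (Γ : Type) [Monoid Γ] :
    augIdeal p Γ =
      Submodule.span (ZMod p) {x | ∃ g : Γ, MonoidAlgebra.of (ZMod p) Γ g - 1 = x} := by
  apply le_antisymm
  · intro x hx
    have key : ∀ y : MonoidAlgebra (ZMod p) Γ,
        y - algebraMap (ZMod p) (MonoidAlgebra (ZMod p) Γ)
            (MonoidAlgebra.lift (ZMod p) (ZMod p) Γ (1 : Γ →* ZMod p) y) ∈
          Submodule.span (ZMod p) {x | ∃ g : Γ, MonoidAlgebra.of (ZMod p) Γ g - 1 = x} := by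
      intro y
      induction y using MonoidAlgebra.induction_on with
      | of g =>
        have h1 : MonoidAlgebra.lift (ZMod p) (ZMod p) Γ (1 : Γ →* ZMod p)
            (MonoidAlgebra.of (ZMod p) Γ g) = 1 := by
          rw [MonoidAlgebra.lift_of]; simp
        rw [h1, map_one]
        exact Submodule.subset_span ⟨g, rfl⟩
      | add f g hf hg =>
        rw [map_add, map_add, add_sub_add_comm]
        exact add_mem hf hg
      | smul r f hf =>
        rw [map_smul, Algebra.algebraMap_eq_smul_one, smul_eq_mul, mul_smul,
          ← Algebra.algebraMap_eq_smul_one, ← smul_sub]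
        exact Submodule.smul_mem _ _ hf
    have hx0 : MonoidAlgebra.lift (ZMod p) (ZMod p) Γ (1 : Γ →* ZMod p) x = 0 :=
      (mem_augIdeal_iff p x).mp hx
    have := key x
    rwa [hx0, map_zero, sub_zero] at this
  · rw [Submodule.span_le]
    rintro x ⟨g, rfl⟩
    exact of_sub_one_mem_augIdeal p g

/-- monotonicity of submodule powers -/
lemma pow_le_pow_of_le {R A : Type*} [CommSemiring R] [Semiring A] [Algebra R A]
    {M N : Submodule R A} (h : M ≤ N) : ∀ n : ℕ, M ^ n ≤ N ^ n
  | 0 => le_rfl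
  | n + 1 => by
    rw [pow_succ, pow_succ]
    exact mul_le_mul' (pow_le_pow_of_le h n) h

lemma top_mul_pow_le {R A : Type*} [CommSemiring R] [Semiring A] [Algebra R A]
    {T : Submodule R A} (hT : T * ⊤ ≤ ⊤ * T) : ∀ b : ℕ, (⊤ * T) ^ b ≤ ⊤ * T ^ b := by
  have swap : ∀ k : ℕ, T ^ k * ⊤ ≤ ⊤ * T ^ k := by
    intro k
    induction k with
    | zero => rw [pow_zero, one_mul, mul_one]
    | succ k ih =>
      calc T ^ (k + 1) * ⊤ = T ^ k * (T * ⊤) := by rw [pow_succ, mul_assoc]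
        _ ≤ T ^ k * (⊤ * T) := mul_le_mul' le_rfl hT
        _ = (T ^ k * ⊤) * T := by rw [mul_assoc]
        _ ≤ (⊤ * T ^ k) * T := mul_le_mul' ih le_rfl
        _ = ⊤ * T ^ (k + 1) := by rw [mul_assoc, ← pow_succ]
  intro b
  induction b with
  | zero => rw [pow_zero, pow_zero, mul_one]; exact le_top
  | succ b ih =>
    calc (⊤ * T) ^ (b + 1) = (⊤ * T) ^ b * (⊤ * T) := by rw [pow_succ]
      _ ≤ (⊤ * T ^ b) * (⊤ * T) := mul_le_mul' ih le_rfl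
      _ = ⊤ * ((T ^ b * ⊤) * T) := by rw [mul_assoc, ← mul_assoc (T ^ b)]
      _ ≤ ⊤ * ((⊤ * T ^ b) * T) :=
        mul_le_mul' le_rfl (mul_le_mul' (swap b) le_rfl)
      _ = (⊤ * ⊤) * (T ^ b * T) := by rw [mul_assoc ⊤ (T ^ b) T, ← mul_assoc]
      _ ≤ ⊤ * (T ^ b * T) := mul_le_mul' le_top le_rfl
      _ = ⊤ * T ^ (b + 1) := by rw [← pow_succ]

end Aux

section Quot

variable (p : ℕ) [Fact p.Prime] {Γ : Type} [Group Γ] (Γ' : Subgroup Γ) [Γ'.Normal]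

/-- `T`: the span of `{n - 1 : n ∈ Γ'}` inside `𝔽_p[Γ]`. -/
noncomputable def subSpan : Submodule (ZMod p) (MonoidAlgebra (ZMod p) Γ) :=
  Submodule.span (ZMod p) {x | ∃ n : Γ', MonoidAlgebra.of (ZMod p) Γ (↑n) - 1 = x}

lemma subSpan_mul_top : subSpan p Γ' * ⊤ ≤ ⊤ * subSpan p Γ' := by
  rw [Submodule.mul_le]
  intro m hm x _
  have main : ∀ y : MonoidAlgebra (ZMod p) Γ, m * y ∈ ⊤ * subSpan p Γ' := by
    induction hm using Submodule.span_induction with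
    | mem m hmem =>
      obtain ⟨n, rfl⟩ := hmem
      intro y
      induction y using MonoidAlgebra.induction_on with
      | of h =>
        have key : (MonoidAlgebra.of (ZMod p) Γ (↑n) - 1) * MonoidAlgebra.of (ZMod p) Γ h =
            MonoidAlgebra.of (ZMod p) Γ h *
              (MonoidAlgebra.of (ZMod p) Γ (↑(⟨h⁻¹ * ↑n * h, by
                simpa using Subgroup.Normal.conj_mem ‹Γ'.Normal› _ n.2 h⁻¹⟩ : Γ')) - 1) := by
          rw [sub_mul, mul_sub, one_mul, mul_one, ← map_mul, ← map_mul]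
          congr 2
          group
        rw [key]
        exact Submodule.mul_mem_mul Submodule.mem_top (Submodule.subset_span ⟨_, rfl⟩)
      | add f g hf hg =>
        rw [mul_add]
        exact add_mem hf hg
      | smul r f hf =>
        rw [mul_smul_comm]
        exact Submodule.smul_mem _ _ hf
    | zero => intro y; rw [zero_mul]; exact zero_mem _
    | add y z _ _ hy hz => intro w; rw [add_mul]; exact add_mem (hy w) (hz w)
    | smul r y _ hy => intro w; rw [smul_mul_assoc]; exact Submodule.smul_mem _ _ (hy w)
  exact main x

/-- The inclusion algebra hom `𝔽_p[Γ'] → 𝔽_p[Γ]`. -/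
noncomputable def inclAlgHom : MonoidAlgebra (ZMod p) Γ' →ₐ[ZMod p] MonoidAlgebra (ZMod p) Γ :=
  MonoidAlgebra.mapDomainAlgHom (ZMod p) (ZMod p) Γ'.subtype

lemma subSpan_le_map : subSpan p Γ' ≤
    Submodule.map (inclAlgHom p Γ').toLinearMap (augIdeal p (Γ' : Type)) := by
  rw [subSpan, Submodule.span_le]
  rintro x ⟨n, rfl⟩
  refine ⟨MonoidAlgebra.of (ZMod p) Γ' n - 1, of_sub_one_mem_augIdeal p n, ?_⟩
  rw [AlgHom.toLinearMap_apply, map_sub, map_one]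
  congr 1
  show MonoidAlgebra.mapDomain (Γ'.subtype) (MonoidAlgebra.single n 1) = _
  rw [MonoidAlgebra.mapDomain_single]
  rfl

/-- The projection algebra hom `𝔽_p[Γ] → 𝔽_p[Γ/Γ']`. -/
noncomputable def projAlgHom :
    MonoidAlgebra (ZMod p) Γ →ₐ[ZMod p] MonoidAlgebra (ZMod p) (Γ ⧸ Γ') :=
  MonoidAlgebra.mapDomainAlgHom (ZMod p) (ZMod p) (QuotientGroup.mk' Γ')

lemma ker_proj_le : LinearMap.ker (projAlgHom p Γ').toLinearMap ≤ ⊤ * subSpan p Γ' := by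
  intro x hx
  set f : Γ → Γ := fun g => ((QuotientGroup.mk g : Γ ⧸ Γ')).out with hf
  set F : MonoidAlgebra (ZMod p) Γ →ₗ[ZMod p] MonoidAlgebra (ZMod p) Γ :=
    MonoidAlgebra.mapDomainLinearMap (ZMod p) (ZMod p) f with hF
  have key : ∀ y : MonoidAlgebra (ZMod p) Γ, y - F y ∈ ⊤ * subSpan p Γ' := by
    intro y
    induction y using MonoidAlgebra.induction_on with
    | of g =>
      have hmem : (f g)⁻¹ * g ∈ Γ' := by
        rw [← QuotientGroup.eq]
        exact QuotientGroup.out_eq' (QuotientGroup.mk g : Γ ⧸ Γ')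
      have h3 : F (MonoidAlgebra.of (ZMod p) Γ g) = MonoidAlgebra.of (ZMod p) Γ (f g) := by
        show MonoidAlgebra.mapDomainLinearMap (ZMod p) (ZMod p) f (MonoidAlgebra.single g 1) =
          MonoidAlgebra.single (f g) 1
        rw [MonoidAlgebra.mapDomainLinearMap_single]
      have key2 : MonoidAlgebra.of (ZMod p) Γ g - F (MonoidAlgebra.of (ZMod p) Γ g) =
          MonoidAlgebra.of (ZMod p) Γ (f g) *
            (MonoidAlgebra.of (ZMod p) Γ (↑(⟨(f g)⁻¹ * g, hmem⟩ : Γ')) - 1) := by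
        rw [h3, mul_sub, mul_one, ← map_mul]
        have h2 : f g * ((f g)⁻¹ * g) = g := by group
        show _ = MonoidAlgebra.of (ZMod p) Γ (f g * ((f g)⁻¹ * g)) - _
        rw [h2]
      rw [key2]
      exact Submodule.mul_mem_mul Submodule.mem_top (Submodule.subset_span ⟨_, rfl⟩)
    | add a b ha hb =>
      rw [map_add, add_sub_add_comm]
      exact add_mem ha hb
    | smul r a ha =>
      rw [map_smul, ← smul_sub]
      exact Submodule.smul_mem _ _ ha
  have hxf : F x = 0 := by
    have hx0 : (projAlgHom p Γ').toLinearMap x = 0 := LinearMap.mem_ker.mp hx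
    have hFG : F x = MonoidAlgebra.mapDomainLinearMap (ZMod p) (ZMod p) (Quotient.out : Γ ⧸ Γ' → Γ)
        ((projAlgHom p Γ').toLinearMap x) := by
      apply MonoidAlgebra.coeff_injective
      show Finsupp.mapDomain f x.coeff =
        Finsupp.mapDomain (Quotient.out : Γ ⧸ Γ' → Γ)
          (Finsupp.mapDomain (⇑(QuotientGroup.mk' Γ')) x.coeff)
      rw [← Finsupp.mapDomain_comp]
      rfl
    rw [hFG, hx0, map_zero]
  have := key x
  rwa [hxf, sub_zero] at this

lemma aug_pow_mul {a b : ℕ} (ha : augIdeal p (Γ ⧸ Γ') ^ a = ⊥)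
    (hb : augIdeal p (Γ' : Type) ^ b = ⊥) : augIdeal p Γ ^ (a * b) = ⊥ := by
  -- Step 1: I^a ≤ ker π
  have hcomm : ∀ y : MonoidAlgebra (ZMod p) Γ,
      (MonoidAlgebra.lift (ZMod p) (ZMod p) (Γ ⧸ Γ') (1 : (Γ ⧸ Γ') →* ZMod p))
        ((projAlgHom p Γ') y) =
      (MonoidAlgebra.lift (ZMod p) (ZMod p) Γ (1 : Γ →* ZMod p)) y := by
    have : (MonoidAlgebra.lift (ZMod p) (ZMod p) (Γ ⧸ Γ') (1 : (Γ ⧸ Γ') →* ZMod p)).comp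
        (projAlgHom p Γ') = MonoidAlgebra.lift (ZMod p) (ZMod p) Γ (1 : Γ →* ZMod p) := by
      apply MonoidAlgebra.algHom_ext
      intro g
      show (MonoidAlgebra.lift (ZMod p) (ZMod p) (Γ ⧸ Γ') (1 : (Γ ⧸ Γ') →* ZMod p))
          ((projAlgHom p Γ') (MonoidAlgebra.of (ZMod p) Γ g)) = _
      have h1 : (projAlgHom p Γ') (MonoidAlgebra.of (ZMod p) Γ g) =
          MonoidAlgebra.of (ZMod p) (Γ ⧸ Γ') (QuotientGroup.mk g) := by
        show MonoidAlgebra.mapDomain (⇑(QuotientGroup.mk' Γ')) (MonoidAlgebra.single g 1) = _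
        rw [MonoidAlgebra.mapDomain_single]
        rfl
      rw [h1, MonoidAlgebra.lift_of]
      show (1 : ZMod p) = MonoidAlgebra.lift (ZMod p) (ZMod p) Γ (1 : Γ →* ZMod p)
        (MonoidAlgebra.single g 1)
      rw [MonoidAlgebra.lift_single]
      simp
      exact Subsingleton.elim _ _
    exact fun y => AlgHom.congr_fun this y
  have hmapI : Submodule.map (projAlgHom p Γ').toLinearMap (augIdeal p Γ) ≤
      augIdeal p (Γ ⧸ Γ') := by
    rintro _ ⟨y, hy, rfl⟩
    rw [AlgHom.toLinearMap_apply, mem_augIdeal_iff, hcomm y]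
    exact (mem_augIdeal_iff p y).mp hy
  have hIa : augIdeal p Γ ^ a ≤ ⊤ * subSpan p Γ' := by
    refine le_trans ?_ (ker_proj_le p Γ')
    intro x hx
    rw [LinearMap.mem_ker]
    have hmem : (projAlgHom p Γ').toLinearMap x ∈
        Submodule.map (projAlgHom p Γ').toLinearMap (augIdeal p Γ ^ a) :=
      Submodule.mem_map_of_mem hx
    rw [Submodule.map_pow] at hmem
    have : (Submodule.map (projAlgHom p Γ').toLinearMap (augIdeal p Γ)) ^ a ≤ ⊥ := by
      rw [← ha]
      exact pow_le_pow_of_le hmapI a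
    simpa using this hmem
  -- Step 2: T^b = ⊥
  have hTb : subSpan p Γ' ^ b = ⊥ := by
    have h1 : subSpan p Γ' ^ b ≤
        (Submodule.map (inclAlgHom p Γ').toLinearMap (augIdeal p (Γ' : Type))) ^ b :=
      pow_le_pow_of_le (subSpan_le_map p Γ') b
    rw [← Submodule.map_pow, hb, Submodule.map_bot] at h1
    exact le_bot_iff.mp h1
  -- Step 3: combine
  rw [pow_mul]
  have hfin : (augIdeal p Γ ^ a) ^ b ≤ (⊤ * subSpan p Γ') ^ b := pow_le_pow_of_le hIa b
  have h2 : (⊤ * subSpan p Γ') ^ b ≤ ⊤ * subSpan p Γ' ^ b :=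
    top_mul_pow_le (subSpan_mul_top p Γ') b
  rw [hTb, Submodule.mul_bot] at h2
  exact le_bot_iff.mp (le_trans hfin h2)

end Quot

section Cyclic

variable (p : ℕ) [Fact p.Prime]

lemma cyclic_aug_pow (Γ : Type) [Group Γ] (g : Γ) (hg : ∀ h : Γ, ∃ i : ℕ, g ^ i = h)
    (hgp : g ^ p = 1) : augIdeal p Γ ^ p = ⊥ := by
  set U : Submodule (ZMod p) (MonoidAlgebra (ZMod p) Γ) :=
    Submodule.span (ZMod p) {MonoidAlgebra.of (ZMod p) Γ g - 1} with hU
  have hIU : augIdeal p Γ ≤ ⊤ * U := by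
    rw [augIdeal_eq_span, Submodule.span_le]
    rintro x ⟨h, rfl⟩
    obtain ⟨i, rfl⟩ := hg h
    have : MonoidAlgebra.of (ZMod p) Γ (g ^ i) - 1 =
        (∑ j ∈ Finset.range i, (MonoidAlgebra.of (ZMod p) Γ g) ^ j) *
          (MonoidAlgebra.of (ZMod p) Γ g - 1) := by
      rw [geom_sum_mul, map_pow]
    rw [this]
    exact Submodule.mul_mem_mul Submodule.mem_top (Submodule.subset_span rfl)
  have hUT : U * ⊤ ≤ ⊤ * U := by
    rw [Submodule.mul_le]
    intro m hm x _
    have main : ∀ y : MonoidAlgebra (ZMod p) Γ, m * y ∈ ⊤ * U := by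
      induction hm using Submodule.span_induction with
      | mem m hmem =>
        rw [Set.mem_singleton_iff] at hmem
        subst hmem
        intro y
        induction y using MonoidAlgebra.induction_on with
        | of h =>
          obtain ⟨i, rfl⟩ := hg h
          have : (MonoidAlgebra.of (ZMod p) Γ g - 1) * MonoidAlgebra.of (ZMod p) Γ (g ^ i) =
              MonoidAlgebra.of (ZMod p) Γ (g ^ i) * (MonoidAlgebra.of (ZMod p) Γ g - 1) := by
            have hc2 : g * g ^ i = g ^ i * g := by rw [← pow_succ', ← pow_succ]
            rw [sub_mul, mul_sub, one_mul, mul_one, ← map_mul, ← map_mul, hc2]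
          rw [this]
          exact Submodule.mul_mem_mul Submodule.mem_top (Submodule.subset_span rfl)
        | add f h hf hh => rw [mul_add]; exact add_mem hf hh
        | smul r f hf => rw [mul_smul_comm]; exact Submodule.smul_mem _ _ hf
      | zero => intro y; rw [zero_mul]; exact zero_mem _
      | add y z _ _ hy hz => intro w; rw [add_mul]; exact add_mem (hy w) (hz w)
      | smul r y _ hy => intro w; rw [smul_mul_assoc]; exact Submodule.smul_mem _ _ (hy w)
    exact main x
  haveI hchar : CharP (MonoidAlgebra (ZMod p) Γ) p :=
    charP_of_injective_algebraMap' (ZMod p) p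
  have hUp : U ^ p = ⊥ := by
    rw [hU, Submodule.span_pow, Set.singleton_pow]
    have : (MonoidAlgebra.of (ZMod p) Γ g - 1) ^ p = 0 := by
      rw [sub_pow_char_of_commute p (Commute.one_right _), ← map_pow, hgp, map_one,
        one_pow, sub_self]
    rw [this]
    exact Submodule.span_zero_singleton (ZMod p)
  have h1 : augIdeal p Γ ^ p ≤ (⊤ * U) ^ p := pow_le_pow_of_le hIU p
  have h2 : (⊤ * U) ^ p ≤ ⊤ * U ^ p := top_mul_pow_le hUT p
  rw [hUp, Submodule.mul_bot] at h2
  exact le_bot_iff.mp (le_trans h1 h2)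

end Cyclic

section Nilpotent

variable (p : ℕ) [Fact p.Prime]

lemma aug_nilpotent : ∀ (N : ℕ) (Γ : Type) [Group Γ] [Finite Γ], Nat.card Γ ≤ N →
    IsPGroup p Γ → ∃ n : ℕ, 0 < n ∧ augIdeal p Γ ^ n = ⊥ := by
  intro N
  induction N with
  | zero =>
    intro Γ _ _ hcard _
    exact absurd (Nat.le_zero.mp hcard) (Nat.card_pos (α := Γ)).ne'
  | succ N ih =>
    intro Γ _ _ hcard hp
    by_cases h1 : Nat.card Γ = 1
    · -- trivial group
      refine ⟨1, one_pos, ?_⟩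
      rw [pow_one, augIdeal_eq_span]
      have hsub : Subsingleton Γ := (Nat.card_eq_one_iff_unique.mp h1).1
      rw [← le_bot_iff, Submodule.span_le]
      rintro x ⟨g, rfl⟩
      have : g = 1 := Subsingleton.elim g 1
      rw [this, map_one, sub_self]
      exact Submodule.zero_mem ⊥
    · have hnt : Nontrivial Γ :=
        Finite.one_lt_card_iff_nontrivial.mp (lt_of_le_of_ne Nat.card_pos (Ne.symm h1))
      -- find a central element of order p
      have hcenter : Nontrivial (Subgroup.center Γ) := hp.center_nontrivial
      haveI : Fintype (Subgroup.center Γ) := Fintype.ofFinite _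
      have hpc : IsPGroup p (Subgroup.center Γ) := hp.to_subgroup _
      have hdvd : p ∣ Fintype.card (Subgroup.center Γ) := by
        obtain ⟨k, hk⟩ := IsPGroup.iff_card.mp hpc
        rcases Nat.eq_zero_or_pos k with hk0 | hk0
        · rw [hk0, pow_zero] at hk
          exact absurd hk Finite.one_lt_card.ne'
        · rw [← Nat.card_eq_fintype_card, hk]
          exact dvd_pow_self p hk0.ne'
      obtain ⟨g₀, hg₀⟩ := exists_prime_orderOf_dvd_card p hdvd
      set g : Γ := (g₀ : Γ) with hgdef
      have hgord : orderOf g = p := by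
        rw [← hg₀]
        exact (orderOf_injective (Subgroup.center Γ).subtype Subtype.coe_injective g₀)
      have hgc : g ∈ Subgroup.center Γ := g₀.2
      haveI hnorm : (Subgroup.zpowers g).Normal := by
        constructor
        intro x hx h
        obtain ⟨i, rfl⟩ := Subgroup.mem_zpowers_iff.mp hx
        have hcomm : h * g = g * h := (Subgroup.mem_center_iff.mp hgc h)
        have hconj : h * g ^ i * h⁻¹ = g ^ i := by
          rw [← conj_zpow]
          congr 1
          rw [hcomm, mul_assoc, mul_inv_cancel, mul_one]
        rw [hconj]
        exact Subgroup.zpow_mem _ (Subgroup.mem_zpowers g) i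
      -- the cyclic subgroup
      have hcyc : augIdeal p ((Subgroup.zpowers g : Subgroup Γ) : Type) ^ p = ⊥ := by
        apply cyclic_aug_pow p _ (⟨g, Subgroup.mem_zpowers g⟩ : Subgroup.zpowers g)
        · intro h
          have hmem := mem_powers_iff_mem_zpowers.mpr h.2
          obtain ⟨i, hi⟩ := Submonoid.mem_powers_iff _ _ |>.mp hmem
          exact ⟨i, Subtype.ext (by simpa using hi)⟩
        · apply Subtype.ext
          simpa using hgord ▸ pow_orderOf_eq_one g
      -- the quotient
      have hcardz : Nat.card (Subgroup.zpowers g) = p := by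
        rw [Nat.card_zpowers, hgord]
      have hcardq : Nat.card (Γ ⧸ Subgroup.zpowers g) ≤ N := by
        have hmul := Subgroup.card_eq_card_quotient_mul_card_subgroup (Subgroup.zpowers g)
        rw [hcardz] at hmul
        have hqpos : 0 < Nat.card (Γ ⧸ Subgroup.zpowers g) := Nat.card_pos
        have hp2 : 2 ≤ p := (Fact.out : p.Prime).two_le
        nlinarith [hcard, hmul, hqpos, hp2]
      obtain ⟨m, hm, hmq⟩ := ih (Γ ⧸ Subgroup.zpowers g) hcardq (hp.to_quotient _)
      exact ⟨m * p, Nat.mul_pos hm (Fact.out : p.Prime).pos,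
        aug_pow_mul p (Subgroup.zpowers g) hmq hcyc⟩

end Nilpotent

/-- Let `p` be a prime, `Γ` a finite `p`-group and `Γ'` a normal subgroup.  The
augmentation ideal of `𝔽_p[Γ]` is nilpotent, and the nilpotency indices satisfy
`k(Γ) ≤ k(Γ/Γ') · k(Γ')`. -/
theorem stmt_9 (p : ℕ) [Fact p.Prime] (Γ : Type) [Group Γ] [Fintype Γ]
    (hΓ : IsPGroup p Γ) (Γ' : Subgroup Γ) [Γ'.Normal] :
    (∃ n : ℕ, 0 < n ∧ augIdeal p Γ ^ n = ⊥) ∧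
      augNilIndex p Γ ≤ augNilIndex p (Γ ⧸ Γ') * augNilIndex p Γ' := by
  have hmain := aug_nilpotent p (Nat.card Γ) Γ le_rfl hΓ
  refine ⟨hmain, ?_⟩
  have hq := aug_nilpotent p (Nat.card (Γ ⧸ Γ')) (Γ ⧸ Γ') le_rfl (hΓ.to_quotient Γ')
  have hs := aug_nilpotent p (Nat.card Γ') Γ' le_rfl (hΓ.to_subgroup Γ')
  have hq' : sInf {n : ℕ | 0 < n ∧ augIdeal p (Γ ⧸ Γ') ^ n = ⊥} ∈
      {n : ℕ | 0 < n ∧ augIdeal p (Γ ⧸ Γ') ^ n = ⊥} := Nat.sInf_mem hq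
  have hs' : sInf {n : ℕ | 0 < n ∧ augIdeal p (Γ' : Type) ^ n = ⊥} ∈
      {n : ℕ | 0 < n ∧ augIdeal p (Γ' : Type) ^ n = ⊥} := Nat.sInf_mem hs
  obtain ⟨ha, hA⟩ := hq'
  obtain ⟨hb, hB⟩ := hs'
  apply Nat.sInf_le
  exact ⟨Nat.mul_pos ha hb, aug_pow_mul p Γ' hA hB⟩
end

section
/- Let K be a number field, p a prime, and V_∅ = {x ∈ K^× : x𝒪_K = I^p for some fractional ideal I of K}. Then the sequence 1 → 𝒪_K^×/(𝒪_K^×)^p → V_∅/(K^×)^p → Cl_K[p] → 1 is exact, where the first map is induced by the inclusion 𝒪_K^× ⊂ V_∅ and the second sends the class of x (with x𝒪_K = I^p) to the ideal class of I. Consequently, dim_{𝔽_p} V_∅/(K^×)^p = dim_{𝔽_p} 𝒪_K^×/(𝒪_K^×)^p + dim_{𝔽_p} Cl_K[p]. -/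
open NumberField

/-- The group `V_∅ = {x ∈ K^× : x𝒪_K = I^p for some fractional ideal I}`, as a
subgroup of `K^×`. -/
noncomputable def Vempty (p : ℕ) (K : Type*) [Field K] [NumberField K] : Subgroup Kˣ where
  carrier := {x : Kˣ | ∃ I : FractionalIdeal (nonZeroDivisors (𝓞 K)) K,
    FractionalIdeal.spanSingleton (nonZeroDivisors (𝓞 K)) (x : K) = I ^ p}
  one_mem' := ⟨1, by simp⟩
  mul_mem' := by
    rintro a b ⟨I, hI⟩ ⟨J, hJ⟩
    exact ⟨I * J, by
      rw [Units.val_mul, ← FractionalIdeal.spanSingleton_mul_spanSingleton, hI, hJ,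
        mul_pow]⟩
  inv_mem' := by
    rintro a ⟨I, hI⟩
    refine ⟨I⁻¹, ?_⟩
    rw [Units.val_inv_eq_inv_val, ← FractionalIdeal.spanSingleton_inv, hI, inv_pow]

set_option linter.unusedSectionVars false

open FractionalIdeal
open scoped nonZeroDivisors

variable {K : Type} [Field K] [NumberField K]

lemma powInj' {p : ℕ} (hp : p ≠ 0)
    {I J : FractionalIdeal (nonZeroDivisors (𝓞 K)) K} (hI : I ≠ 0) (hJ : J ≠ 0)
    (h : I ^ p = J ^ p) : I = J := by
  have hc : ∀ v : IsDedekindDomain.HeightOneSpectrum (𝓞 K),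
      count K v I = count K v J := by
    intro v
    have h2 := congrArg (count K v) h
    rw [count_pow, count_pow] at h2
    exact mul_left_cancel₀ (by exact_mod_cast hp) h2
  rw [← finprod_heightOneSpectrum_factorization' K hI,
      ← finprod_heightOneSpectrum_factorization' K hJ]
  exact finprod_congr fun v => by rw [hc v]

-- Part 1
lemma part1 {p : ℕ} (hp : 0 < p) (u : (𝓞 K)ˣ)
    (h : ∃ y : Kˣ, (Units.map (algebraMap (𝓞 K) K).toMonoidHom u) = y ^ p) :
    ∃ w : (𝓞 K)ˣ, u = w ^ p := by
  obtain ⟨y, hy⟩ := h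
  have hy' : (y : K) ^ p = algebraMap (𝓞 K) K u := by
    have := congrArg (Units.val) hy
    simpa using this.symm
  have hyint : ∃ z : 𝓞 K, algebraMap (𝓞 K) K z = (y : K) :=
    IsIntegrallyClosed.exists_algebraMap_eq_of_isIntegral_pow hp
      (hy' ▸ isIntegral_algebraMap)
  have hyinv : ∃ z : 𝓞 K, algebraMap (𝓞 K) K z = ((y⁻¹ : Kˣ) : K) := by
    refine IsIntegrallyClosed.exists_algebraMap_eq_of_isIntegral_pow hp ?_
    have : ((y⁻¹ : Kˣ) : K) ^ p = algebraMap (𝓞 K) K ((u⁻¹ : (𝓞 K)ˣ) : 𝓞 K) := by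
      rw [← Units.val_pow_eq_pow_val, inv_pow, ← hy]
      simp [← Units.val_pow_eq_pow_val]
    exact this ▸ isIntegral_algebraMap
  obtain ⟨z, hz⟩ := hyint
  obtain ⟨z', hz'⟩ := hyinv
  have hinj := IsFractionRing.injective (𝓞 K) K
  have hzz' : z * z' = 1 := by
    apply hinj
    rw [_root_.map_mul, hz, hz', _root_.map_one]
    simp
  have hz'z : z' * z = 1 := by rwa [mul_comm] at hzz'
  refine ⟨⟨z, z', hzz', hz'z⟩, Units.ext (hinj ?_)⟩
  rw [Units.val_pow_eq_pow_val, map_pow]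
  show algebraMap (𝓞 K) K u = _
  rw [hz, ← hy']

-- Part 2
lemma part2 {p : ℕ} (hp : p ≠ 0) (x : Kˣ) (I : (FractionalIdeal (nonZeroDivisors (𝓞 K)) K)ˣ)
    (h : FractionalIdeal.spanSingleton (nonZeroDivisors (𝓞 K)) (x : K) = (I : _) ^ p) :
    (ClassGroup.mk K I = 1 ↔
      ∃ (u : (𝓞 K)ˣ) (y : Kˣ),
        x = (Units.map (algebraMap (𝓞 K) K).toMonoidHom u) * y ^ p) := by
  constructor
  · intro h1
    have hprin : ((I : FractionalIdeal (nonZeroDivisors (𝓞 K)) K) : Submodule (𝓞 K) K).IsPrincipal :=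
      ClassGroup.mk_eq_one_iff.mp h1
    obtain ⟨y, hy⟩ := hprin
    have hIy : (I : FractionalIdeal (nonZeroDivisors (𝓞 K)) K) =
        spanSingleton (nonZeroDivisors (𝓞 K)) y := by
      rw [← coeToSubmodule_inj, coe_spanSingleton]
      exact hy
    have hy0 : y ≠ 0 := by
      intro h0
      apply I.ne_zero
      rw [hIy, h0, spanSingleton_zero]
    have hsp : spanSingleton (nonZeroDivisors (𝓞 K)) (x : K) =
        spanSingleton (nonZeroDivisors (𝓞 K)) (y ^ p) := by
      rw [h, hIy, spanSingleton_pow]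
    obtain ⟨z, hz⟩ := (spanSingleton_eq_spanSingleton).mp hsp
    -- hz : z • (x:K) = y ^ p
    refine ⟨z⁻¹, Units.mk0 y hy0, Units.ext ?_⟩
    have hz' : algebraMap (𝓞 K) K (z : 𝓞 K) * (x : K) = y ^ p := by
      rw [← hz, Units.smul_def, Algebra.smul_def]
    push_cast
    show (x : K) = algebraMap (𝓞 K) K ((z⁻¹ : (𝓞 K)ˣ) : 𝓞 K) * y ^ p
    rw [← hz']
    rw [← mul_assoc, ← _root_.map_mul]
    norm_num
  · rintro ⟨u, y, rfl⟩
    rw [ClassGroup.mk_eq_one_iff]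
    have hy0 : (y : K) ≠ 0 := y.ne_zero
    have hIy : (I : FractionalIdeal (nonZeroDivisors (𝓞 K)) K) =
        spanSingleton (nonZeroDivisors (𝓞 K)) (y : K) := by
      refine powInj' hp I.ne_zero (by simp [spanSingleton_eq_zero_iff, hy0]) ?_
      rw [← h, spanSingleton_pow]
      apply (spanSingleton_eq_spanSingleton).mpr
      refine ⟨u⁻¹, ?_⟩
      rw [Units.smul_def, Algebra.smul_def]
      push_cast
      show algebraMap (𝓞 K) K ((u⁻¹ : (𝓞 K)ˣ) : 𝓞 K) *
        ((Units.map (algebraMap (𝓞 K) K).toMonoidHom u : Kˣ) * (y : K) ^ p) = (y : K) ^ p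
      have : ((Units.map (algebraMap (𝓞 K) K).toMonoidHom u : Kˣ) : K)
          = algebraMap (𝓞 K) K (u : 𝓞 K) := rfl
      rw [this, ← mul_assoc, ← _root_.map_mul, Units.inv_mul, _root_.map_one, one_mul]
    rw [hIy, coe_spanSingleton]
    exact ⟨⟨(y : K), rfl⟩⟩

lemma part3 {p : ℕ} (c : ClassGroup (𝓞 K)) (hc : c ^ p = 1) :
    ∃ (x : Kˣ) (I : (FractionalIdeal (nonZeroDivisors (𝓞 K)) K)ˣ),
      FractionalIdeal.spanSingleton (nonZeroDivisors (𝓞 K)) (x : K) = (I : _) ^ p ∧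
      ClassGroup.mk K I = c := by
  obtain ⟨J, hJ⟩ := ClassGroup.mk0_surjective c
  have hJp : ClassGroup.mk0 (J ^ p) = 1 := by rw [map_pow, hJ, hc]
  have hPrin : (((J ^ p : (Ideal (𝓞 K))⁰) : (Ideal (𝓞 K))⁰) : Ideal (𝓞 K)).IsPrincipal := by
    rw [← ClassGroup.mk0_eq_one_iff (SetLike.coe_mem _)]
    convert hJp
  obtain ⟨a, ha⟩ := hPrin
  have hJ0 : (((J ^ p : (Ideal (𝓞 K))⁰) : (Ideal (𝓞 K))⁰) : Ideal (𝓞 K)) ≠ 0 :=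
    mem_nonZeroDivisors_iff_ne_zero.mp (SetLike.coe_mem _)
  have ha0 : a ≠ 0 := by
    intro h0
    apply hJ0
    rw [ha, h0]
    simp
  have hxK : algebraMap (𝓞 K) K a ≠ 0 :=
    (map_ne_zero_iff _ (IsFractionRing.injective (𝓞 K) K)).mpr ha0
  refine ⟨Units.mk0 _ hxK, FractionalIdeal.mk0 K J, ?_, by rw [ClassGroup.mk_mk0, hJ]⟩
  rw [Units.val_mk0]
  have : ((FractionalIdeal.mk0 K J : (FractionalIdeal (nonZeroDivisors (𝓞 K)) K)ˣ) :
      FractionalIdeal (nonZeroDivisors (𝓞 K)) K) = ((J : Ideal (𝓞 K)) :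
      FractionalIdeal (nonZeroDivisors (𝓞 K)) K) := rfl
  rw [this, ← coeIdeal_pow]
  have h2 : (((J ^ p : (Ideal (𝓞 K))⁰) : (Ideal (𝓞 K))⁰) : Ideal (𝓞 K)) = (J : Ideal (𝓞 K)) ^ p := rfl
  rw [← h2, ha]
  rw [← coeIdeal_span_singleton]

section Aux

variable {p : ℕ} [Fact p.Prime]

lemma hp0 : p ≠ 0 := (Fact.out : p.Prime).ne_zero

noncomputable def idealOf (x : Vempty p K) :
    (FractionalIdeal (nonZeroDivisors (𝓞 K)) K)ˣ :=
  Units.mk0 (Classical.choose x.2) (by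
    intro h0
    have hs := Classical.choose_spec x.2
    rw [h0, zero_pow hp0, spanSingleton_eq_zero_iff] at hs
    exact (x : Kˣ).ne_zero hs)

lemma idealOf_spec (x : Vempty p K) :
    spanSingleton (nonZeroDivisors (𝓞 K)) (((x : Kˣ) : K)) = (idealOf x : _) ^ p :=
  Classical.choose_spec x.2

lemma idealOf_unique (x : Vempty p K) (I : (FractionalIdeal (nonZeroDivisors (𝓞 K)) K)ˣ)
    (h : spanSingleton (nonZeroDivisors (𝓞 K)) (((x : Kˣ) : K)) = (I : _) ^ p) :
    idealOf x = I := by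
  apply Units.ext
  exact powInj' hp0 (idealOf x).ne_zero I.ne_zero (by rw [← idealOf_spec x, h])

noncomputable def phiV : Vempty p K →* ClassGroup (𝓞 K) :=
  MonoidHom.mk' (fun x => ClassGroup.mk K (idealOf x)) (by
    intro a b
    show ClassGroup.mk K (idealOf (a * b)) = ClassGroup.mk K (idealOf a) * ClassGroup.mk K (idealOf b)
    rw [← _root_.map_mul]
    congr 1
    apply idealOf_unique
    have : (((a * b : Vempty p K) : Kˣ) : K) = ((a : Kˣ) : K) * ((b : Kˣ) : K) := by
      push_cast; rfl
    rw [this, ← spanSingleton_mul_spanSingleton, idealOf_spec a, idealOf_spec b, Units.val_mul, mul_pow])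

lemma span_unit_eq_one (u : (𝓞 K)ˣ) :
    spanSingleton (nonZeroDivisors (𝓞 K)) (algebraMap (𝓞 K) K (u : 𝓞 K)) = 1 := by
  rw [← coeIdeal_span_singleton, Ideal.span_singleton_eq_top.mpr u.isUnit]
  simp

lemma unit_mem_Vempty (u : (𝓞 K)ˣ) :
    (Units.map (algebraMap (𝓞 K) K).toMonoidHom u : Kˣ) ∈ Vempty p K :=
  ⟨1, by rw [one_pow]; exact span_unit_eq_one u⟩

noncomputable def jV : (𝓞 K)ˣ →* Vempty p K where
  toFun u := ⟨Units.map (algebraMap (𝓞 K) K).toMonoidHom u, unit_mem_Vempty u⟩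
  map_one' := by ext; simp
  map_mul' u v := by ext; simp

end Aux


lemma part2aux {p : ℕ} (hp : p ≠ 0) (x : Kˣ) (I : (FractionalIdeal (nonZeroDivisors (𝓞 K)) K)ˣ)
    (h : FractionalIdeal.spanSingleton (nonZeroDivisors (𝓞 K)) (x : K) = (I : _) ^ p)
    (h1 : ClassGroup.mk K I = 1) :
    ∃ (u : (𝓞 K)ˣ) (y : Kˣ),
      x = (Units.map (algebraMap (𝓞 K) K).toMonoidHom u) * y ^ p :=
  (part2 hp x I h).mp h1

lemma part1aux {p : ℕ} (hp : 0 < p) (u : (𝓞 K)ˣ)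
    (h : ∃ y : Kˣ, (Units.map (algebraMap (𝓞 K) K).toMonoidHom u) = y ^ p) :
    ∃ w : (𝓞 K)ˣ, u = w ^ p := part1 hp u h

lemma part3aux {p : ℕ} (c : ClassGroup (𝓞 K)) (hc : c ^ p = 1) :
    ∃ (x : Kˣ) (I : (FractionalIdeal (nonZeroDivisors (𝓞 K)) K)ˣ),
      FractionalIdeal.spanSingleton (nonZeroDivisors (𝓞 K)) (x : K) = (I : _) ^ p ∧
      ClassGroup.mk K I = c := part3 c hc

lemma part4 {p : ℕ} [Fact p.Prime] :
    Nat.card (Vempty p K ⧸ ((powMonoidHom p : Kˣ →* Kˣ).range.subgroupOf (Vempty p K)))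
      = Nat.card ((𝓞 K)ˣ ⧸ (powMonoidHom p : (𝓞 K)ˣ →* (𝓞 K)ˣ).range)
        * Nat.card {c : ClassGroup (𝓞 K) // c ^ p = 1} := by
  set N := (powMonoidHom p : Kˣ →* Kˣ).range.subgroupOf (Vempty p K) with hNdef
  have hN : ∀ x ∈ N, phiV x = 1 := by
    intro x hx
    rw [Subgroup.mem_subgroupOf] at hx
    obtain ⟨y, hy⟩ := hx
    show ClassGroup.mk K (idealOf x) = 1
    have hy0 : (y : K) ≠ 0 := y.ne_zero
    have hspan : spanSingleton (nonZeroDivisors (𝓞 K)) (((x : Kˣ) : K)) =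
        (spanSingleton (nonZeroDivisors (𝓞 K)) ((y : Kˣ) : K)) ^ p := by
      rw [spanSingleton_pow, ← hy]
      push_cast
      rfl
    have hne : spanSingleton (nonZeroDivisors (𝓞 K)) ((y : Kˣ) : K) ≠ 0 := by
      simp [spanSingleton_eq_zero_iff, hy0]
    have := idealOf_unique x (Units.mk0 _ hne) (by rw [Units.val_mk0]; exact hspan)
    rw [this, ClassGroup.mk_eq_one_iff]
    exact ⟨⟨(y : K), by rw [Units.val_mk0, coe_spanSingleton]⟩⟩
  set φbar := QuotientGroup.lift N phiV hN with hφdef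
  have hlift : ∀ x : Vempty p K, φbar (QuotientGroup.mk x) = ClassGroup.mk K (idealOf x) :=
    fun x => rfl
  have hrange : ∀ c : ClassGroup (𝓞 K), c ∈ φbar.range ↔ c ^ p = 1 := by
    intro c
    constructor
    · rintro ⟨q, rfl⟩
      induction q using QuotientGroup.induction_on with
      | H x =>
        rw [hlift x, ← _root_.map_pow, ClassGroup.mk_eq_one_iff]
        refine ⟨⟨((x : Kˣ) : K), ?_⟩⟩
        rw [Units.val_pow_eq_pow_val, ← idealOf_spec x, coe_spanSingleton]
    · intro hc
      obtain ⟨x, I, hspan, hmk⟩ := part3aux c hc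
      have hxmem : x ∈ Vempty p K := ⟨(I : FractionalIdeal (nonZeroDivisors (𝓞 K)) K), hspan⟩
      refine ⟨QuotientGroup.mk ⟨x, hxmem⟩, ?_⟩
      rw [hlift, idealOf_unique ⟨x, hxmem⟩ I hspan, hmk]
  set ψ := (QuotientGroup.mk' N).comp jV with hψdef
  have hψmem : ∀ u : (𝓞 K)ˣ, ψ u ∈ φbar.ker := by
    intro u
    rw [MonoidHom.mem_ker]
    show φbar (QuotientGroup.mk (jV u)) = 1
    rw [hlift, idealOf_unique (jV u) 1 (by
      rw [Units.val_one, one_pow]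
      exact span_unit_eq_one u), _root_.map_one]
  set ψ' := ψ.codRestrict φbar.ker hψmem with hψ'def
  have hsurj : Function.Surjective ψ' := by
    rintro ⟨q, hq⟩
    induction q using QuotientGroup.induction_on with
    | H x =>
      rw [MonoidHom.mem_ker, hlift] at hq
      obtain ⟨u, y, hxy⟩ := part2aux ((Fact.out : p.Prime).ne_zero) (x : Kˣ) (idealOf x) (idealOf_spec x) hq
      refine ⟨u, Subtype.ext ?_⟩
      show QuotientGroup.mk (jV u) = QuotientGroup.mk x
      rw [QuotientGroup.eq]
      rw [hNdef, Subgroup.mem_subgroupOf]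
      refine ⟨y, ?_⟩
      show y ^ p = (((jV u)⁻¹ * x : Vempty p K) : Kˣ)
      push_cast
      show y ^ p = (((jV u : Vempty p K) : Kˣ))⁻¹ * (x : Kˣ)
      have hj : ((jV u : Vempty p K) : Kˣ) = Units.map (algebraMap (𝓞 K) K).toMonoidHom u := rfl
      rw [hj, hxy]
      group
  have hker : ψ'.ker = (powMonoidHom p : (𝓞 K)ˣ →* (𝓞 K)ˣ).range := by
    ext u
    rw [MonoidHom.mem_ker]
    have h1 : ψ' u = 1 ↔ ψ u = 1 := by
      constructor
      · intro h; exact congrArg Subtype.val h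
      · intro h; exact Subtype.ext h
    rw [h1]
    have h2 : ψ u = 1 ↔ jV u ∈ N := by
      rw [hψdef]
      exact QuotientGroup.eq_one_iff (jV u)
    rw [h2, hNdef, Subgroup.mem_subgroupOf]
    constructor
    · rintro ⟨y, hy⟩
      obtain ⟨w, hw⟩ := part1aux ((Fact.out : p.Prime).pos) u ⟨y, hy.symm⟩
      exact ⟨w, hw.symm⟩
    · rintro ⟨w, rfl⟩
      exact ⟨Units.map (algebraMap (𝓞 K) K).toMonoidHom w, by
        show (Units.map (algebraMap (𝓞 K) K).toMonoidHom w) ^ p = _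
        rw [← _root_.map_pow]
        rfl⟩
  have hcard1 : Nat.card (Vempty p K ⧸ N) =
      Nat.card ((Vempty p K ⧸ N) ⧸ φbar.ker) * Nat.card φbar.ker :=
    Subgroup.card_eq_card_quotient_mul_card_subgroup _
  have e1 : ((Vempty p K ⧸ N) ⧸ φbar.ker) ≃* φbar.range :=
    QuotientGroup.quotientKerEquivRange φbar
  have e2 : ((𝓞 K)ˣ ⧸ ψ'.ker) ≃* φbar.ker :=
    QuotientGroup.quotientKerEquivOfSurjective ψ' hsurj
  rw [hcard1, Nat.card_congr e1.toEquiv, ← Nat.card_congr e2.toEquiv,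
    Nat.card_congr (Equiv.subtypeEquivRight hrange), hker, mul_comm]


/-- Exactness of `1 → 𝒪_K^×/(𝒪_K^×)^p → V_∅/(K^×)^p → Cl_K[p] → 1`, stated
elementwise, together with the resulting relation between the cardinalities (i.e. the
`𝔽_p`-dimension formula `dim V_∅/(K^×)^p = dim 𝒪_K^×/(𝒪_K^×)^p + dim Cl_K[p]`). -/
theorem stmt_13 (p : ℕ) [Fact p.Prime] (K : Type) [Field K] [NumberField K] :
    -- injectivity of 𝒪_K^×/(𝒪_K^×)^p → V_∅/(K^×)^p
    (∀ u : (𝓞 K)ˣ, (∃ y : Kˣ, (Units.map (algebraMap (𝓞 K) K).toMonoidHom u) = y ^ p) →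
      ∃ w : (𝓞 K)ˣ, u = w ^ p) ∧
    -- exactness in the middle: x ∈ V_∅ with x𝒪_K = I^p has trivial image in Cl_K
    -- iff x ∈ 𝒪_K^× · (K^×)^p
    (∀ (x : Kˣ) (I : (FractionalIdeal (nonZeroDivisors (𝓞 K)) K)ˣ),
      FractionalIdeal.spanSingleton (nonZeroDivisors (𝓞 K)) (x : K) = (I : _) ^ p →
      (ClassGroup.mk K I = 1 ↔
        ∃ (u : (𝓞 K)ˣ) (y : Kˣ), x = (Units.map (algebraMap (𝓞 K) K).toMonoidHom u) * y ^ p)) ∧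
    -- surjectivity onto Cl_K[p]
    (∀ c : ClassGroup (𝓞 K), c ^ p = 1 →
      ∃ (x : Kˣ) (I : (FractionalIdeal (nonZeroDivisors (𝓞 K)) K)ˣ),
        FractionalIdeal.spanSingleton (nonZeroDivisors (𝓞 K)) (x : K) = (I : _) ^ p ∧
        ClassGroup.mk K I = c) ∧
    -- dimension (cardinality) formula
    Nat.card (Vempty p K ⧸
        ((powMonoidHom p : Kˣ →* Kˣ).range.subgroupOf (Vempty p K)))
      = Nat.card ((𝓞 K)ˣ ⧸ (powMonoidHom p : (𝓞 K)ˣ →* (𝓞 K)ˣ).range)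
        * Nat.card {c : ClassGroup (𝓞 K) // c ^ p = 1} :=
  ⟨fun u h => part1 (Fact.out : p.Prime).pos u h,
   fun x I h => part2 (Fact.out : p.Prime).ne_zero x I h,
   fun c hc => part3 c hc,
   part4⟩
end
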